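/- arXiv:2011.10806 — 6 statements merged into one kernel-verified Lean document; each statement's English description precedes it below -/
import Mathlib

section
/- Let A : [0,∞) → ℝ^{d×d} be continuous satisfying ⟨A(t)y, y⟩ ≥ δ|y|² and |A(t)| ≤ C for all t ≥ 0, y ∈ ℝ^d, with constants 0 < δ ≤ C. Let Φ solve dΦ_t/dt = Φ_t A(t), Φ_0 = I_d (so Φ_t is invertible for all t). Then for all 0 ≤ s ≤ t and all z ∈ ℝ^d: (1/√d) e^{-C(t-s)}|z| ≤ |Φ_s^* (Φ_t^{-1})^* z| ≤ √d e^{-δ(t-s)}|z|. -/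
open Matrix

theorem stmt6 {d : ℕ} (A : ℝ → Matrix (Fin d) (Fin d) ℝ)
    (hAcont : ∀ i j, Continuous fun t => A t i j)
    (δ C : ℝ) (hδ : 0 < δ) (hδC : δ ≤ C)
    (hAcoer : ∀ t : ℝ, 0 ≤ t → ∀ y : Fin d → ℝ,
      δ * ∑ i, (y i) ^ 2 ≤ (A t).mulVec y ⬝ᵥ y)
    (hAbd : ∀ t : ℝ, 0 ≤ t → ∀ y : Fin d → ℝ,
      Real.sqrt (∑ i, ((A t).mulVec y i) ^ 2) ≤ C * Real.sqrt (∑ i, (y i) ^ 2))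
    (Φ : ℝ → Matrix (Fin d) (Fin d) ℝ)
    (hΦ0 : Φ 0 = 1)
    (hΦinv : ∀ t : ℝ, 0 ≤ t → IsUnit (Φ t))
    (hΦ : ∀ i j, ∀ t ∈ Set.Ici (0 : ℝ),
      HasDerivWithinAt (fun u => Φ u i j) ((Φ t * A t) i j) (Set.Ici 0) t) :
    ∀ s t : ℝ, 0 ≤ s → s ≤ t → ∀ z : Fin d → ℝ,
      (1 / Real.sqrt d) * Real.exp (-C * (t - s)) * Real.sqrt (∑ i, (z i) ^ 2) ≤
        Real.sqrt (∑ i, (((Φ s)ᵀ * ((Φ t)⁻¹)ᵀ).mulVec z i) ^ 2) ∧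
      Real.sqrt (∑ i, (((Φ s)ᵀ * ((Φ t)⁻¹)ᵀ).mulVec z i) ^ 2) ≤
        Real.sqrt d * Real.exp (-δ * (t - s)) * Real.sqrt (∑ i, (z i) ^ 2) := by
  intro s t hs hst z
  rcases Nat.eq_zero_or_pos d with hd | hd
  · subst hd
    simp
  have hC : 0 ≤ C := le_trans hδ.le hδC
  have ht : (0:ℝ) ≤ t := le_trans hs hst
  set c : Fin d → ℝ := (((Φ t)⁻¹)ᵀ).mulVec z with hc
  set w : ℝ → Fin d → ℝ := fun u => ((Φ u)ᵀ).mulVec c with hwdef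
  set f : ℝ → ℝ := fun u => ∑ i, (w u i)^2 with hfdef
  -- basic facts
  have hΦtinv : (Φ t)⁻¹ * Φ t = 1 :=
    Matrix.nonsing_inv_mul _ ((Matrix.isUnit_iff_isUnit_det _).mp (hΦinv t ht))
  have hwt : w t = z := by
    have h1 : (Φ t)ᵀ * ((Φ t)⁻¹)ᵀ = 1 := by
      rw [← Matrix.transpose_mul, hΦtinv, Matrix.transpose_one]
    simp [hwdef, hc, Matrix.mulVec_mulVec, h1, Matrix.one_mulVec]
  have hws : ((Φ s)ᵀ * ((Φ t)⁻¹)ᵀ).mulVec z = w s := by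
    simp [hwdef, hc, Matrix.mulVec_mulVec]
  -- derivative of each component of w
  have hw' : ∀ (i : Fin d), ∀ u ∈ Set.Ici (0:ℝ),
      HasDerivWithinAt (fun v => w v i) (((A u)ᵀ).mulVec (w u) i) (Set.Ici 0) u := by
    intro i u hu
    have h1 : HasDerivWithinAt (fun v => ∑ j, Φ v j i * c j)
        (∑ j, (Φ u * A u) j i * c j) (Set.Ici 0) u :=
      HasDerivWithinAt.fun_sum (fun j _ => (hΦ j i u hu).mul_const (c j))
    have e1 : (fun v => ∑ j, Φ v j i * c j) = fun v => w v i := by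
      funext v
      simp [hwdef, Matrix.mulVec, dotProduct, Matrix.transpose_apply]
    have e2 : (∑ j, (Φ u * A u) j i * c j) = ((A u)ᵀ).mulVec (w u) i := by
      simp only [hwdef, Matrix.mulVec, dotProduct, Matrix.transpose_apply,
        Matrix.mul_apply]
      simp_rw [Finset.sum_mul, Finset.mul_sum]
      rw [Finset.sum_comm]
      exact Finset.sum_congr rfl fun j _ => Finset.sum_congr rfl fun k _ => by ring
    rw [e1, e2] at h1
    exact h1
  -- derivative of f
  have hf' : ∀ u ∈ Set.Ici (0:ℝ),
      HasDerivWithinAt f (2 * ((A u).mulVec (w u) ⬝ᵥ w u)) (Set.Ici 0) u := by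
    intro u hu
    have h1 : HasDerivWithinAt (fun v => ∑ i, (w v i)^2)
        (∑ i, 2 * w u i * (((A u)ᵀ).mulVec (w u) i)) (Set.Ici 0) u := by
      apply HasDerivWithinAt.fun_sum
      intro i _
      have h2 := (hw' i u hu).pow 2
      exact h2.congr_deriv (by push_cast; ring)
    have e3 : (∑ i, 2 * w u i * (((A u)ᵀ).mulVec (w u) i))
        = 2 * ((A u).mulVec (w u) ⬝ᵥ w u) := by
      simp only [Matrix.mulVec, dotProduct, Matrix.transpose_apply]
      simp_rw [Finset.mul_sum, Finset.sum_mul]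
      rw [Finset.sum_comm]
      refine Finset.sum_congr rfl fun j _ => ?_
      rw [Finset.mul_sum]
      exact Finset.sum_congr rfl fun k _ => by ring
    rw [e3] at h1
    exact h1
  have hfcont : ContinuousOn f (Set.Ici 0) := fun u hu => (hf' u hu).continuousWithinAt
  have hfnn : ∀ u : ℝ, 0 ≤ f u := fun u => Finset.sum_nonneg fun i _ => sq_nonneg _
  -- quadratic form bounds
  have quadLB : ∀ u : ℝ, 0 ≤ u → δ * f u ≤ (A u).mulVec (w u) ⬝ᵥ w u := by
    intro u hu
    exact hAcoer u hu (w u)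
  have quadUB : ∀ u : ℝ, 0 ≤ u → (A u).mulVec (w u) ⬝ᵥ w u ≤ C * f u := by
    intro u hu
    have h1 := hAbd u hu (w u)
    have hy : (0:ℝ) ≤ ∑ i, (w u i)^2 := hfnn u
    have hcs := Finset.sum_mul_sq_le_sq_mul_sq Finset.univ
      (fun i => (A u).mulVec (w u) i) (fun i => w u i)
    have hdot : (A u).mulVec (w u) ⬝ᵥ w u = ∑ i, (A u).mulVec (w u) i * w u i := rfl
    have h2 : (A u).mulVec (w u) ⬝ᵥ w u ≤
        Real.sqrt (∑ i, ((A u).mulVec (w u) i)^2) * Real.sqrt (∑ i, (w u i)^2) := by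
      rw [hdot]
      calc ∑ i, (A u).mulVec (w u) i * w u i
          ≤ |∑ i, (A u).mulVec (w u) i * w u i| := le_abs_self _
        _ = Real.sqrt ((∑ i, (A u).mulVec (w u) i * w u i)^2) :=
            (Real.sqrt_sq_eq_abs _).symm
        _ ≤ Real.sqrt ((∑ i, ((A u).mulVec (w u) i)^2) * ∑ i, (w u i)^2) :=
            Real.sqrt_le_sqrt hcs
        _ = Real.sqrt (∑ i, ((A u).mulVec (w u) i)^2) * Real.sqrt (∑ i, (w u i)^2) :=
            Real.sqrt_mul (Finset.sum_nonneg fun i _ => sq_nonneg _) _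
    calc (A u).mulVec (w u) ⬝ᵥ w u
        ≤ Real.sqrt (∑ i, ((A u).mulVec (w u) i)^2) * Real.sqrt (∑ i, (w u i)^2) := h2
      _ ≤ (C * Real.sqrt (∑ i, (w u i)^2)) * Real.sqrt (∑ i, (w u i)^2) :=
          mul_le_mul_of_nonneg_right h1 (Real.sqrt_nonneg _)
      _ = C * (Real.sqrt (∑ i, (w u i)^2) * Real.sqrt (∑ i, (w u i)^2)) := by ring
      _ = C * f u := by rw [Real.mul_self_sqrt hy]
  -- Gronwall: monotone for the δ-weighted function
  have hmono : MonotoneOn (fun u => f u * Real.exp (-(2*δ)*u)) (Set.Ici 0) := by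
    apply monotoneOn_of_hasDerivWithinAt_nonneg (convex_Ici 0)
      (hfcont.mul (Real.continuous_exp.comp (by fun_prop)).continuousOn)
      (f' := fun u => (2 * ((A u).mulVec (w u) ⬝ᵥ w u) - 2*δ * f u) * Real.exp (-(2*δ)*u))
    · intro x hx
      rw [interior_Ici] at hx
      have hx0 : (0:ℝ) ≤ x := le_of_lt hx
      have hfd := (hf' x hx0).mono (Set.Ioi_subset_Ici le_rfl)
      have hed : HasDerivAt (fun u : ℝ => Real.exp (-(2*δ)*u))
          (Real.exp (-(2*δ)*x) * (-(2*δ) * 1)) x :=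
        ((hasDerivAt_id x).const_mul (-(2*δ))).exp
      have := hfd.mul (hed.hasDerivWithinAt)
      rw [interior_Ici]
      exact this.congr_deriv (by ring)
    · intro x hx
      rw [interior_Ici] at hx
      have hx0 : (0:ℝ) ≤ x := le_of_lt hx
      have h1 := quadLB x hx0
      have h2 : (0:ℝ) ≤ 2 * ((A x).mulVec (w x) ⬝ᵥ w x) - 2*δ * f x := by linarith
      exact mul_nonneg h2 (Real.exp_pos _).le
  -- Gronwall: antitone for the C-weighted function
  have hanti : AntitoneOn (fun u => f u * Real.exp (-(2*C)*u)) (Set.Ici 0) := by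
    apply antitoneOn_of_hasDerivWithinAt_nonpos (convex_Ici 0)
      (hfcont.mul (Real.continuous_exp.comp (by fun_prop)).continuousOn)
      (f' := fun u => (2 * ((A u).mulVec (w u) ⬝ᵥ w u) - 2*C * f u) * Real.exp (-(2*C)*u))
    · intro x hx
      rw [interior_Ici] at hx
      have hx0 : (0:ℝ) ≤ x := le_of_lt hx
      have hfd := (hf' x hx0).mono (Set.Ioi_subset_Ici le_rfl)
      have hed : HasDerivAt (fun u : ℝ => Real.exp (-(2*C)*u))
          (Real.exp (-(2*C)*x) * (-(2*C) * 1)) x :=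
        ((hasDerivAt_id x).const_mul (-(2*C))).exp
      have := hfd.mul (hed.hasDerivWithinAt)
      rw [interior_Ici]
      exact this.congr_deriv (by ring)
    · intro x hx
      rw [interior_Ici] at hx
      have hx0 : (0:ℝ) ≤ x := le_of_lt hx
      have h1 := quadUB x hx0
      have h2 : 2 * ((A x).mulVec (w x) ⬝ᵥ w x) - 2*C * f x ≤ 0 := by linarith
      exact mul_nonpos_of_nonpos_of_nonneg h2 (Real.exp_pos _).le
  have hsmem : s ∈ Set.Ici (0:ℝ) := hs
  have htmem : t ∈ Set.Ici (0:ℝ) := ht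
  -- upper bound on f s
  have hUB : f s ≤ Real.exp (-(2*δ)*(t-s)) * f t := by
    have h0 := hmono hsmem htmem hst
    calc f s = f s * Real.exp (-(2*δ)*s) * Real.exp ((2*δ)*s) := by
          rw [mul_assoc, ← Real.exp_add, (by ring : -(2*δ)*s + (2*δ)*s = 0),
            Real.exp_zero, mul_one]
      _ ≤ f t * Real.exp (-(2*δ)*t) * Real.exp ((2*δ)*s) :=
          mul_le_mul_of_nonneg_right h0 (Real.exp_pos _).le
      _ = Real.exp (-(2*δ)*(t-s)) * f t := by
          rw [mul_assoc, ← Real.exp_add]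
          ring_nf
  -- lower bound on f s
  have hLB : Real.exp (-(2*C)*(t-s)) * f t ≤ f s := by
    have h0 := hanti hsmem htmem hst
    calc Real.exp (-(2*C)*(t-s)) * f t
        = f t * Real.exp (-(2*C)*t) * Real.exp ((2*C)*s) := by
          rw [mul_assoc, ← Real.exp_add]
          ring_nf
      _ ≤ f s * Real.exp (-(2*C)*s) * Real.exp ((2*C)*s) :=
          mul_le_mul_of_nonneg_right h0 (Real.exp_pos _).le
      _ = f s := by
          rw [mul_assoc, ← Real.exp_add, (by ring : -(2*C)*s + (2*C)*s = 0),
            Real.exp_zero, mul_one]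
  -- convert to square roots
  have hft : f t = ∑ i, (z i)^2 := by rw [hfdef]; simp [hwt]
  have hZ : Real.sqrt (f t) = Real.sqrt (∑ i, (z i)^2) := by rw [hft]
  have hexpδ : Real.sqrt (Real.exp (-(2*δ)*(t-s))) = Real.exp (-δ*(t-s)) := by
    have : Real.exp (-(2*δ)*(t-s)) = (Real.exp (-δ*(t-s)))^2 := by
      rw [sq, ← Real.exp_add]; ring_nf
    rw [this, Real.sqrt_sq (Real.exp_pos _).le]
  have hexpC : Real.sqrt (Real.exp (-(2*C)*(t-s))) = Real.exp (-C*(t-s)) := by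
    have : Real.exp (-(2*C)*(t-s)) = (Real.exp (-C*(t-s)))^2 := by
      rw [sq, ← Real.exp_add]; ring_nf
    rw [this, Real.sqrt_sq (Real.exp_pos _).le]
  have hd1 : (1:ℝ) ≤ Real.sqrt d := by
    rw [Real.one_le_sqrt]
    exact_mod_cast hd
  have hgoal_rw : (∑ i, (((Φ s)ᵀ * ((Φ t)⁻¹)ᵀ).mulVec z i)^2) = f s := by
    rw [hws]
  rw [hgoal_rw]
  constructor
  · -- lower bound
    have h1 : Real.exp (-C*(t-s)) * Real.sqrt (∑ i, (z i)^2) ≤ Real.sqrt (f s) := by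
      have := Real.sqrt_le_sqrt hLB
      rwa [Real.sqrt_mul (Real.exp_pos _).le, hexpC, hZ] at this
    have h2 : (1 / Real.sqrt d) * Real.exp (-C*(t-s)) * Real.sqrt (∑ i, (z i)^2)
        ≤ Real.exp (-C*(t-s)) * Real.sqrt (∑ i, (z i)^2) := by
      have hinv : 1 / Real.sqrt d ≤ 1 := by
        rw [div_le_one (lt_of_lt_of_le one_pos hd1)]
        exact hd1
      have hnn : (0:ℝ) ≤ Real.exp (-C*(t-s)) * Real.sqrt (∑ i, (z i)^2) :=
        mul_nonneg (Real.exp_pos _).le (Real.sqrt_nonneg _)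
      calc (1 / Real.sqrt d) * Real.exp (-C*(t-s)) * Real.sqrt (∑ i, (z i)^2)
          = (1 / Real.sqrt d) * (Real.exp (-C*(t-s)) * Real.sqrt (∑ i, (z i)^2)) := by ring
        _ ≤ 1 * (Real.exp (-C*(t-s)) * Real.sqrt (∑ i, (z i)^2)) :=
            mul_le_mul_of_nonneg_right hinv hnn
        _ = Real.exp (-C*(t-s)) * Real.sqrt (∑ i, (z i)^2) := by ring
    linarith
  · -- upper bound
    have h1 : Real.sqrt (f s) ≤ Real.exp (-δ*(t-s)) * Real.sqrt (∑ i, (z i)^2) := by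
      have := Real.sqrt_le_sqrt hUB
      rwa [Real.sqrt_mul (Real.exp_pos _).le, hexpδ, hZ] at this
    have h2 : Real.exp (-δ*(t-s)) * Real.sqrt (∑ i, (z i)^2)
        ≤ Real.sqrt d * (Real.exp (-δ*(t-s)) * Real.sqrt (∑ i, (z i)^2)) := by
      have hnn : (0:ℝ) ≤ Real.exp (-δ*(t-s)) * Real.sqrt (∑ i, (z i)^2) :=
        mul_nonneg (Real.exp_pos _).le (Real.sqrt_nonneg _)
      nlinarith
    calc Real.sqrt (f s) ≤ Real.exp (-δ*(t-s)) * Real.sqrt (∑ i, (z i)^2) := h1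
      _ ≤ Real.sqrt d * (Real.exp (-δ*(t-s)) * Real.sqrt (∑ i, (z i)^2)) := h2
      _ = Real.sqrt d * Real.exp (-δ*(t-s)) * Real.sqrt (∑ i, (z i)^2) := by ring
end

section
/- Let ν be a Lévy measure on ℝ^d (i.e., ν({0}) = 0 and ∫ (1 ∧ |z|²) ν(dz) < ∞) with ∫_{|u|>1} |u|^β ν(du) < ∞ for some β ∈ (0,1). Then the characteristic exponent ψ(z) = ∫_{ℝ^d} (e^{i⟨u,z⟩} - 1 - i⟨u,z⟩ 1_{|u|≤1}) ν(du) is locally Hölder continuous with Hölder exponent β; in particular there is a constant C such that |ψ(z₁) - ψ(z₂)| ≤ C|z₁ - z₂|^β whenever |z₁|, |z₂| ≤ 1/2. -/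
open MeasureTheory
open scoped RealInnerProductSpace ENNReal

/-- The characteristic exponent of a pure-jump Lévy measure `ν`. -/
noncomputable def levyCharExp {d : ℕ} (ν : Measure (EuclideanSpace ℝ (Fin d)))
    (z : EuclideanSpace ℝ (Fin d)) : ℂ :=
  ∫ u, (Complex.exp (Complex.I * (⟪u, z⟫ : ℝ)) - 1 -
      Complex.I * (⟪u, z⟫ : ℝ) *
        Set.indicator {u : EuclideanSpace ℝ (Fin d) | ‖u‖ ≤ 1} (fun _ => (1 : ℂ)) u) ∂ν

namespace LevyAux

variable {d : ℕ}

variable {d : ℕ}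

noncomputable def g (β : ℝ) (u : EuclideanSpace ℝ (Fin d)) : ℝ :=
  if ‖u‖ ≤ 1 then ‖u‖ ^ 2 else 2 * ‖u‖ ^ β

lemma g_meas {β : ℝ} (hβ : 0 < β) : Measurable (g (d := d) β) := by
  refine Measurable.ite (measurableSet_le measurable_norm measurable_const) ?_ ?_
  · exact (measurable_norm.pow_const 2)
  · exact (((Real.continuous_rpow_const hβ.le).comp
      continuous_norm).measurable).const_mul 2

lemma g_integrable (ν : Measure (EuclideanSpace ℝ (Fin d)))
    (hν2 : ∫⁻ z, ENNReal.ofReal (min 1 (‖z‖ ^ 2)) ∂ν < ⊤)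
    {β : ℝ} (hβ : 0 < β)
    (hνβ : ∫⁻ z in {z : EuclideanSpace ℝ (Fin d) | 1 < ‖z‖},
      ENNReal.ofReal (‖z‖ ^ β) ∂ν < ⊤) :
    Integrable (g β) ν := by
  refine ⟨(g_meas hβ).aestronglyMeasurable, ?_⟩
  rw [hasFiniteIntegral_iff_norm]
  set A : EuclideanSpace ℝ (Fin d) → ℝ≥0∞ := fun u => ENNReal.ofReal (min 1 (‖u‖ ^ 2))
  set B : EuclideanSpace ℝ (Fin d) → ℝ≥0∞ :=
    ({u : EuclideanSpace ℝ (Fin d) | 1 < ‖u‖}.indicator fun u => 2 * ENNReal.ofReal (‖u‖ ^ β))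
  have hle : ∀ u, ENNReal.ofReal ‖g β u‖ ≤ A u + B u := by
    intro u
    by_cases h : ‖u‖ ≤ 1
    · have h0 : g β u = ‖u‖ ^ 2 := if_pos h
      have hB0 : B u = 0 := Set.indicator_of_notMem (by simp [not_lt.mpr h]) _
      have hmin : min 1 (‖u‖ ^ 2) = ‖u‖ ^ 2 :=
        min_eq_right (by nlinarith [norm_nonneg u])
      rw [h0, hB0, add_zero, Real.norm_eq_abs, abs_of_nonneg (by positivity)]
      simp only [A, hmin, le_refl]
    · push_neg at h
      have hB : B u = 2 * ENNReal.ofReal (‖u‖ ^ β) := Set.indicator_of_mem (show u ∈ {u : EuclideanSpace ℝ (Fin d) | 1 < ‖u‖} from h) _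
      have h0 : g β u = 2 * ‖u‖ ^ β := if_neg (not_le.mpr h)
      have hpos : (0:ℝ) ≤ ‖u‖ ^ β := Real.rpow_nonneg (norm_nonneg u) β
      rw [h0, Real.norm_eq_abs, abs_of_nonneg (by positivity),
        ENNReal.ofReal_mul (by norm_num), hB]
      simp only [ENNReal.ofReal_ofNat]
      exact le_add_of_nonneg_left zero_le
  have hAmeas : Measurable A :=
    (measurable_const.min (measurable_norm.pow_const 2)).ennreal_ofReal
  calc ∫⁻ u, ENNReal.ofReal ‖g β u‖ ∂ν ≤ ∫⁻ u, (A u + B u) ∂ν := lintegral_mono hle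
    _ = (∫⁻ u, A u ∂ν) + ∫⁻ u, B u ∂ν := lintegral_add_left hAmeas _
    _ < ⊤ := by
        have hBeq : ∫⁻ u, B u ∂ν
            = 2 * ∫⁻ u in {u : EuclideanSpace ℝ (Fin d) | 1 < ‖u‖},
                ENNReal.ofReal (‖u‖ ^ β) ∂ν := by
          rw [lintegral_indicator (measurableSet_lt measurable_const measurable_norm)]
          exact lintegral_const_mul 2
            ((((Real.continuous_rpow_const hβ.le).comp
              continuous_norm).measurable).ennreal_ofReal)
        rw [hBeq]
        exact ENNReal.add_lt_top.mpr ⟨hν2, ENNReal.mul_lt_top (by simp) hνβ⟩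


variable {d : ℕ}

noncomputable def F (z u : EuclideanSpace ℝ (Fin d)) : ℂ :=
  Complex.exp (Complex.I * (⟪u, z⟫ : ℝ)) - 1 -
      Complex.I * (⟪u, z⟫ : ℝ) *
        Set.indicator {u : EuclideanSpace ℝ (Fin d) | ‖u‖ ≤ 1} (fun _ => (1 : ℂ)) u


lemma abs_I_mul (θ : ℝ) : ‖Complex.I * (θ : ℝ)‖ = |θ| := by
  simp

lemma norm_exp_I_mul (θ : ℝ) : ‖Complex.exp (Complex.I * (θ : ℝ))‖ = 1 := by
  rw [mul_comm, Complex.norm_exp_ofReal_mul_I]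

lemma le_rpow_self {x β : ℝ} (hx0 : 0 ≤ x) (hx1 : x ≤ 1) (hβ0 : 0 < β) (hβ1 : β ≤ 1) :
    x ≤ x ^ β := by
  rcases hx0.eq_or_lt with h | h
  · rw [← h, Real.zero_rpow hβ0.ne']
  · calc x = x ^ (1:ℝ) := (Real.rpow_one x).symm
      _ ≤ x ^ β := Real.rpow_le_rpow_of_exponent_ge h hx1 hβ1

lemma F_bound {β : ℝ} (hβ : 0 < β) (z : EuclideanSpace ℝ (Fin d)) (hz : ‖z‖ ≤ 1 / 2)
    (u : EuclideanSpace ℝ (Fin d)) : ‖F z u‖ ≤ g β u := by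
  have hθ : |(⟪u, z⟫ : ℝ)| ≤ ‖u‖ * ‖z‖ := abs_real_inner_le_norm u z
  unfold F g
  by_cases h : ‖u‖ ≤ 1
  · rw [Set.indicator_of_mem (show u ∈ {u : EuclideanSpace ℝ (Fin d) | ‖u‖ ≤ 1} from h),
      mul_one, if_pos h]
    have hθ1 : |(⟪u, z⟫ : ℝ)| ≤ 1 := by nlinarith [norm_nonneg u, norm_nonneg z]
    have hkey := Complex.norm_exp_sub_one_sub_id_le
      (x := Complex.I * ((⟪u, z⟫ : ℝ) : ℂ)) (by rw [abs_I_mul]; exact hθ1)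
    calc ‖_‖ ≤ ‖Complex.I * ((⟪u, z⟫ : ℝ) : ℂ)‖ ^ 2 := hkey
      _ = |(⟪u, z⟫ : ℝ)| ^ 2 := by rw [abs_I_mul]
      _ ≤ ‖u‖ ^ 2 := by
          have hle : |(⟪u, z⟫ : ℝ)| ≤ ‖u‖ := by nlinarith [norm_nonneg u, norm_nonneg z]
          exact pow_le_pow_left₀ (abs_nonneg _) hle 2
  · rw [Set.indicator_of_notMem (show u ∉ {u : EuclideanSpace ℝ (Fin d) | ‖u‖ ≤ 1} from h),
      mul_zero, sub_zero, if_neg h]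
    push_neg at h
    have h1 : (1:ℝ) ≤ ‖u‖ ^ β := Real.one_le_rpow h.le hβ.le
    calc ‖Complex.exp (Complex.I * ((⟪u, z⟫ : ℝ) : ℂ)) - 1‖
        ≤ ‖Complex.exp (Complex.I * ((⟪u, z⟫ : ℝ) : ℂ))‖ + ‖(1:ℂ)‖ := norm_sub_le _ _
      _ = 2 := by rw [norm_exp_I_mul]; norm_num
      _ ≤ 2 * ‖u‖ ^ β := by linarith

lemma F_diff_bound {β : ℝ} (hβ : β ∈ Set.Ioo (0 : ℝ) 1)
    (z₁ z₂ : EuclideanSpace ℝ (Fin d)) (hz₁ : ‖z₁‖ ≤ 1 / 2) (hz₂ : ‖z₂‖ ≤ 1 / 2)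
    (u : EuclideanSpace ℝ (Fin d)) :
    ‖F z₁ u - F z₂ u‖ ≤ 2 * g β u * ‖z₁ - z₂‖ ^ β := by
  obtain ⟨hβ0, hβ1⟩ := hβ
  set θ₁ : ℝ := (⟪u, z₁⟫ : ℝ) with hθ₁def
  set θ₂ : ℝ := (⟪u, z₂⟫ : ℝ) with hθ₂def
  have hθ₁ : |θ₁| ≤ ‖u‖ * ‖z₁‖ := abs_real_inner_le_norm u z₁
  have hθ₂ : |θ₂| ≤ ‖u‖ * ‖z₂‖ := abs_real_inner_le_norm u z₂
  have hδ : |θ₁ - θ₂| ≤ ‖u‖ * ‖z₁ - z₂‖ := by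
    have : θ₁ - θ₂ = (⟪u, z₁ - z₂⟫ : ℝ) := by rw [inner_sub_right]
    rw [this]; exact abs_real_inner_le_norm u _
  have hz12 : ‖z₁ - z₂‖ ≤ 1 := le_trans (norm_sub_le _ _) (by linarith)
  have hb : ‖z₁ - z₂‖ ≤ ‖z₁ - z₂‖ ^ β :=
    le_rpow_self (norm_nonneg _) hz12 hβ0 hβ1.le
  have hrpow0 : (0:ℝ) ≤ ‖z₁ - z₂‖ ^ β := Real.rpow_nonneg (norm_nonneg _) β
  by_cases h : ‖u‖ ≤ 1
  · -- small u
    have key : F z₁ u - F z₂ u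
        = Complex.exp (Complex.I * (θ₂ : ℂ)) *
            (Complex.exp (Complex.I * ((θ₁ - θ₂ : ℝ) : ℂ)) - 1 - Complex.I * ((θ₁ - θ₂ : ℝ) : ℂ))
          + Complex.I * ((θ₁ - θ₂ : ℝ) : ℂ) * (Complex.exp (Complex.I * (θ₂ : ℂ)) - 1) := by
      unfold F
      rw [Set.indicator_of_mem (show u ∈ {u : EuclideanSpace ℝ (Fin d) | ‖u‖ ≤ 1} from h)]
      have e : Complex.I * ((θ₁ : ℝ) : ℂ)
          = Complex.I * (θ₂ : ℂ) + Complex.I * ((θ₁ - θ₂ : ℝ) : ℂ) := by push_cast; ring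
      rw [← hθ₁def, ← hθ₂def, e, Complex.exp_add]
      push_cast; ring
    have hδ1 : |θ₁ - θ₂| ≤ 1 := by nlinarith [norm_nonneg u]
    have hθ₂1 : |θ₂| ≤ 1 := by nlinarith [norm_nonneg u]
    have h1 := Complex.norm_exp_sub_one_sub_id_le
      (x := Complex.I * ((θ₁ - θ₂ : ℝ) : ℂ)) (by rw [abs_I_mul]; exact hδ1)
    have h2 := Complex.norm_exp_sub_one_le
      (x := Complex.I * ((θ₂ : ℝ) : ℂ)) (by rw [abs_I_mul]; exact hθ₂1)
    rw [abs_I_mul] at h1 h2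
    rw [key, g, if_pos h]
    have hnorm : ‖Complex.exp (Complex.I * (θ₂ : ℂ)) *
            (Complex.exp (Complex.I * ((θ₁ - θ₂ : ℝ) : ℂ)) - 1 - Complex.I * ((θ₁ - θ₂ : ℝ) : ℂ))
          + Complex.I * ((θ₁ - θ₂ : ℝ) : ℂ) * (Complex.exp (Complex.I * (θ₂ : ℂ)) - 1)‖
        ≤ |θ₁ - θ₂| ^ 2 + |θ₁ - θ₂| * (2 * |θ₂|) := by
      calc _ ≤ ‖Complex.exp (Complex.I * (θ₂ : ℂ)) *
            (Complex.exp (Complex.I * ((θ₁ - θ₂ : ℝ) : ℂ)) - 1 - Complex.I * ((θ₁ - θ₂ : ℝ) : ℂ))‖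
          + ‖Complex.I * ((θ₁ - θ₂ : ℝ) : ℂ) * (Complex.exp (Complex.I * (θ₂ : ℂ)) - 1)‖ :=
            norm_add_le _ _
        _ ≤ |θ₁ - θ₂| ^ 2 + |θ₁ - θ₂| * (2 * |θ₂|) := by
            rw [norm_mul, norm_mul, norm_exp_I_mul, one_mul,
              abs_I_mul]
            exact add_le_add h1 (mul_le_mul_of_nonneg_left h2 (abs_nonneg _))
    refine hnorm.trans ?_
    have e1 : |θ₁ - θ₂| ^ 2 ≤ (‖u‖ * ‖z₁ - z₂‖) ^ 2 :=
      pow_le_pow_left₀ (abs_nonneg _) hδ 2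
    have hub : ‖u‖ * ‖z₁ - z₂‖ ≤ ‖z₁ - z₂‖ := by
      nlinarith [norm_nonneg (z₁ - z₂), norm_nonneg u]
    -- |θ₁-θ₂|² + 2|θ₁-θ₂||θ₂| ≤ ‖u‖²‖z₁-z₂‖² + 2 ‖u‖‖z₁-z₂‖ ‖u‖/2 ≤ 2‖u‖² ‖z₁-z₂‖
    have t1 : |θ₁ - θ₂| ^ 2 ≤ ‖u‖ ^ 2 * ‖z₁ - z₂‖ := by
      have b : (‖u‖ * ‖z₁ - z₂‖) ^ 2 ≤ ‖u‖ ^ 2 * ‖z₁ - z₂‖ := by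
        nlinarith [mul_nonneg (mul_nonneg (sq_nonneg ‖u‖) (norm_nonneg (z₁ - z₂)))
          (sub_nonneg.mpr hz12)]
      exact e1.trans b
    have h2θ : 2 * |θ₂| ≤ ‖u‖ := by nlinarith [norm_nonneg u]
    have t2 : |θ₁ - θ₂| * (2 * |θ₂|) ≤ ‖u‖ ^ 2 * ‖z₁ - z₂‖ :=
      (mul_le_mul hδ h2θ (by positivity) (by positivity)).trans_eq (by ring)
    have main : |θ₁ - θ₂| ^ 2 + |θ₁ - θ₂| * (2 * |θ₂|) ≤ 2 * ‖u‖ ^ 2 * ‖z₁ - z₂‖ := by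
      linarith
    refine main.trans ?_
    have h0 : (0:ℝ) ≤ 2 * ‖u‖ ^ 2 := by positivity
    exact (mul_le_mul_of_nonneg_left hb h0).trans_eq (by ring)
  · -- large u
    push_neg at h
    have key : F z₁ u - F z₂ u
        = Complex.exp (Complex.I * (θ₂ : ℂ)) *
            (Complex.exp (Complex.I * ((θ₁ - θ₂ : ℝ) : ℂ)) - 1) := by
      unfold F
      rw [Set.indicator_of_notMem (show u ∉ {u : EuclideanSpace ℝ (Fin d) | ‖u‖ ≤ 1} from
        not_le.mpr h)]
      have e : Complex.I * ((θ₁ : ℝ) : ℂ)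
          = Complex.I * (θ₂ : ℂ) + Complex.I * ((θ₁ - θ₂ : ℝ) : ℂ) := by push_cast; ring
      rw [← hθ₁def, ← hθ₂def, e, Complex.exp_add]
      push_cast; ring
    rw [key, norm_mul, norm_exp_I_mul, one_mul, g, if_neg (not_le.mpr h)]
    have hd : ‖Complex.exp (Complex.I * ((θ₁ - θ₂ : ℝ) : ℂ)) - 1‖ ≤ 2 * |θ₁ - θ₂| ^ β := by
      by_cases hδ1 : |θ₁ - θ₂| ≤ 1
      · have h2 := Complex.norm_exp_sub_one_le
          (x := Complex.I * ((θ₁ - θ₂ : ℝ) : ℂ)) (by rw [abs_I_mul]; exact hδ1)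
        rw [abs_I_mul] at h2
        refine h2.trans ?_
        have := le_rpow_self (abs_nonneg (θ₁ - θ₂)) hδ1 hβ0 hβ1.le
        linarith
      · push_neg at hδ1
        have h1 : (1:ℝ) ≤ |θ₁ - θ₂| ^ β := Real.one_le_rpow hδ1.le hβ0.le
        calc ‖Complex.exp (Complex.I * ((θ₁ - θ₂ : ℝ) : ℂ)) - 1‖
            ≤ ‖Complex.exp (Complex.I * ((θ₁ - θ₂ : ℝ) : ℂ))‖ + ‖(1:ℂ)‖ := norm_sub_le _ _
          _ = 2 := by rw [norm_exp_I_mul]; norm_num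
          _ ≤ 2 * |θ₁ - θ₂| ^ β := by linarith
    refine hd.trans ?_
    have hδβ : |θ₁ - θ₂| ^ β ≤ ‖u‖ ^ β * ‖z₁ - z₂‖ ^ β := by
      rw [← Real.mul_rpow (norm_nonneg u) (norm_nonneg (z₁ - z₂))]
      exact Real.rpow_le_rpow (abs_nonneg _) hδ hβ0.le
    have huβ : (0:ℝ) ≤ ‖u‖ ^ β := Real.rpow_nonneg (norm_nonneg u) β
    calc 2 * |θ₁ - θ₂| ^ β ≤ 2 * (‖u‖ ^ β * ‖z₁ - z₂‖ ^ β) := by linarith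
      _ ≤ 2 * (2 * ‖u‖ ^ β) * ‖z₁ - z₂‖ ^ β := by nlinarith

lemma F_meas (z : EuclideanSpace ℝ (Fin d)) : Measurable (F z) := by
  have h1 : Measurable fun u : EuclideanSpace ℝ (Fin d) => (⟪u, z⟫ : ℝ) :=
    (continuous_id.inner continuous_const).measurable
  have h2 : Measurable fun u : EuclideanSpace ℝ (Fin d) => ((⟪u, z⟫ : ℝ) : ℂ) :=
    Complex.measurable_ofReal.comp h1
  have hs : MeasurableSet {u : EuclideanSpace ℝ (Fin d) | ‖u‖ ≤ 1} :=
    measurableSet_le measurable_norm measurable_const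
  exact ((Complex.measurable_exp.comp (h2.const_mul Complex.I)).sub measurable_const).sub
    ((h2.const_mul Complex.I).mul (Measurable.indicator measurable_const hs))

lemma g_nonneg (β : ℝ) (hβ : 0 < β) (u : EuclideanSpace ℝ (Fin d)) : 0 ≤ g β u := by
  unfold g; split
  · positivity
  · positivity

end LevyAux

theorem stmt7 {d : ℕ} (ν : Measure (EuclideanSpace ℝ (Fin d)))
    (hν0 : ν {0} = 0)
    (hν2 : ∫⁻ z, ENNReal.ofReal (min 1 (‖z‖ ^ 2)) ∂ν < ⊤)
    (β : ℝ) (hβ : β ∈ Set.Ioo (0 : ℝ) 1)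
    (hνβ : ∫⁻ z in {z : EuclideanSpace ℝ (Fin d) | 1 < ‖z‖}, ENNReal.ofReal (‖z‖ ^ β) ∂ν < ⊤) :
    ∃ C : ℝ, ∀ z₁ z₂ : EuclideanSpace ℝ (Fin d), ‖z₁‖ ≤ 1 / 2 → ‖z₂‖ ≤ 1 / 2 →
      ‖levyCharExp ν z₁ - levyCharExp ν z₂‖ ≤ C * ‖z₁ - z₂‖ ^ β := by
  obtain ⟨hβ0, hβ1⟩ := hβ
  have hg : Integrable (LevyAux.g β) ν := LevyAux.g_integrable ν hν2 hβ0 hνβ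
  refine ⟨2 * ∫ u, LevyAux.g β u ∂ν, fun z₁ z₂ hz₁ hz₂ => ?_⟩
  have hF : ∀ z : EuclideanSpace ℝ (Fin d), ‖z‖ ≤ 1 / 2 → Integrable (LevyAux.F z) ν := by
    intro z hz
    refine hg.mono (LevyAux.F_meas z).aestronglyMeasurable ?_
    filter_upwards with u
    rw [Real.norm_eq_abs, abs_of_nonneg (LevyAux.g_nonneg β hβ0 u)]
    exact LevyAux.F_bound hβ0 z hz u
  have hsub : levyCharExp ν z₁ - levyCharExp ν z₂ = ∫ u, (LevyAux.F z₁ u - LevyAux.F z₂ u) ∂ν := by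
    rw [integral_sub (hF z₁ hz₁) (hF z₂ hz₂)]; rfl
  rw [hsub]
  calc ‖∫ u, (LevyAux.F z₁ u - LevyAux.F z₂ u) ∂ν‖
      ≤ ∫ u, 2 * LevyAux.g β u * ‖z₁ - z₂‖ ^ β ∂ν := by
        refine norm_integral_le_of_norm_le ((hg.const_mul 2).mul_const _) ?_
        filter_upwards with u
        exact LevyAux.F_diff_bound ⟨hβ0, hβ1⟩ z₁ z₂ hz₁ hz₂ u
    _ = 2 * (∫ u, LevyAux.g β u ∂ν) * ‖z₁ - z₂‖ ^ β := by
        rw [integral_mul_const, integral_const_mul]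
end

section
/- Let (a_n) be positive reals with a_n → 0 and n·a_n → ∞. For n ∈ ℕ define f_n(z) = (1/n) ∑_{j=1}^n g_n(z - j/n), where g_n(z) = (1/a_n) 1_{[0,a_n]}(z). Then f_n(z) → 1_{(0,1]}(z) as n → ∞ for every z ∈ ℝ; consequently, by Scheffé's lemma, ∫_ℝ |f_n(z) - 1_{(0,1]}(z)| dz → 0, i.e., if X_n has density f_n and U is uniform on [0,1], the total variation distance between X_n and U converges to 0. -/
open MeasureTheory Filter

/-- The density of `X_n = U_n + R_n`, where `U_n` is uniform on `{j/n : j = 1,…,n}`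
and `R_n` is uniform on `[0, a n]`, independent of `U_n`. -/
noncomputable def convDensity (a : ℕ → ℝ) (n : ℕ) (z : ℝ) : ℝ :=
  (1 / (n : ℝ)) * ∑ j ∈ Finset.Icc 1 n,
    Set.indicator (Set.Icc (0 : ℝ) (a n)) (fun _ => 1 / a n) (z - (j : ℝ) / (n : ℝ))

lemma term_integrable (a c : ℝ) :
    Integrable (fun z => Set.indicator (Set.Icc (0:ℝ) a) (fun _ => 1/a) (z - c)) := by
  have h : Integrable (Set.indicator (Set.Icc (0:ℝ) a) (fun _ => 1/a)) := by
    rw [integrable_indicator_iff measurableSet_Icc]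
    exact integrableOn_const (by simp [Real.volume_Icc])
  exact h.comp_sub_right c

lemma term_integral (a c : ℝ) (ha : 0 < a) :
    ∫ z, Set.indicator (Set.Icc (0:ℝ) a) (fun _ => 1/a) (z - c) = 1 := by
  rw [integral_sub_right_eq_self (Set.indicator (Set.Icc (0:ℝ) a) (fun _ => 1/a)) c]
  rw [integral_indicator_const _ measurableSet_Icc]
  simp [Real.volume_Icc, ENNReal.toReal_ofReal ha.le, ha.ne', max_eq_left ha.le]

lemma convDensity_nonneg (a : ℕ → ℝ) (ha : ∀ n, 0 < a n) (n : ℕ) (z : ℝ) :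
    0 ≤ convDensity a n z := by
  unfold convDensity
  apply mul_nonneg (by positivity)
  apply Finset.sum_nonneg
  intro j _
  apply Set.indicator_nonneg
  intro x _
  have := ha n
  positivity

lemma convDensity_integrable (a : ℕ → ℝ) (n : ℕ) :
    Integrable (convDensity a n) := by
  unfold convDensity
  exact Integrable.const_mul (integrable_finset_sum (Finset.Icc 1 n) (fun j _ => term_integrable (a n) ((j:ℝ)/(n:ℝ)))) _

lemma convDensity_integral (a : ℕ → ℝ) (ha : ∀ n, 0 < a n) (n : ℕ) (hn : 1 ≤ n) :
    ∫ z, convDensity a n z = 1 := by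
  unfold convDensity
  rw [MeasureTheory.integral_const_mul, MeasureTheory.integral_finset_sum (Finset.Icc 1 n) (fun j _ => term_integrable (a n) ((j:ℝ)/(n:ℝ)))]
  have : ∀ j ∈ Finset.Icc 1 n, (∫ z, Set.indicator (Set.Icc (0:ℝ) (a n)) (fun _ => 1/(a n)) (z - (j:ℝ)/(n:ℝ))) = 1 :=
    fun j _ => term_integral (a n) _ (ha n)
  rw [Finset.sum_congr rfl this, Finset.sum_const]
  have hn' : (0:ℝ) < n := by exact_mod_cast hn
  simp [Nat.card_Icc]
  field_simp

lemma convDensity_eq_card (a : ℕ → ℝ) (ha : ∀ n, 0 < a n) (n : ℕ) (z : ℝ) :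
    convDensity a n z =
      ((Finset.Icc 1 n).filter (fun j : ℕ => (z - (j:ℝ)/(n:ℝ)) ∈ Set.Icc (0:ℝ) (a n))).card
        / ((n:ℝ) * a n) := by
  unfold convDensity
  have h1 : ∀ j ∈ Finset.Icc 1 n,
      Set.indicator (Set.Icc (0:ℝ) (a n)) (fun _ => 1 / a n) (z - (j:ℝ)/(n:ℝ)) =
      if (z - (j:ℝ)/(n:ℝ)) ∈ Set.Icc (0:ℝ) (a n) then 1 / a n else 0 := by
    intro j _
    rw [Set.indicator_apply]
  rw [Finset.sum_congr rfl h1, Finset.sum_ite, Finset.sum_const, Finset.sum_const]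
  simp only [smul_zero, add_zero, nsmul_eq_mul]
  rw [one_div, one_div, div_eq_mul_inv, mul_inv]
  ring

lemma convDensity_tendsto (a : ℕ → ℝ) (ha : ∀ n, 0 < a n)
    (ha0 : Tendsto a atTop (nhds 0))
    (hna : Tendsto (fun n : ℕ => (n : ℝ) * a n) atTop atTop) (z : ℝ) :
    Tendsto (fun n => convDensity a n z) atTop
      (nhds (Set.indicator (Set.Ioc (0 : ℝ) 1) (fun _ => (1 : ℝ)) z)) := by
  rcases le_or_gt z 0 with hz0 | hz0
  · -- z ≤ 0
    have hval : ∀ n, convDensity a n z = 0 := by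
      intro n
      unfold convDensity
      rw [Finset.sum_eq_zero, mul_zero]
      intro j hj
      rw [Finset.mem_Icc] at hj
      apply Set.indicator_of_notMem
      rw [Set.mem_Icc]
      push_neg
      intro h0
      exfalso
      have hn : (0:ℝ) < n := by exact_mod_cast lt_of_lt_of_le hj.1 hj.2
      have hj1 : (0:ℝ) < (j:ℝ)/n := div_pos (by exact_mod_cast hj.1) hn
      linarith
    have htarget : Set.indicator (Set.Ioc (0 : ℝ) 1) (fun _ => (1 : ℝ)) z = 0 :=
      Set.indicator_of_notMem (by simp [hz0]) _
    simp only [hval, htarget]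
    exact tendsto_const_nhds
  rcases le_or_gt z 1 with hz1 | hz1
  · -- 0 < z ≤ 1
    have htarget : Set.indicator (Set.Ioc (0 : ℝ) 1) (fun _ => (1 : ℝ)) z = 1 :=
      Set.indicator_of_mem (Set.mem_Ioc.mpr ⟨hz0, hz1⟩) _
    rw [htarget]
    have hinv : Tendsto (fun n : ℕ => ((n:ℝ) * a n)⁻¹) atTop (nhds 0) :=
      hna.inv_tendsto_atTop
    have hlow : Tendsto (fun n : ℕ => 1 - ((n:ℝ) * a n)⁻¹) atTop (nhds 1) := by
      have := tendsto_const_nhds.sub hinv (f := fun _ : ℕ => (1:ℝ))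
      simpa using this
    have hhigh : Tendsto (fun n : ℕ => 1 + ((n:ℝ) * a n)⁻¹) atTop (nhds 1) := by
      have := tendsto_const_nhds.add hinv (f := fun _ : ℕ => (1:ℝ))
      simpa using this
    have hbound : ∀ᶠ n : ℕ in atTop,
        1 - ((n:ℝ) * a n)⁻¹ ≤ convDensity a n z ∧
        convDensity a n z ≤ 1 + ((n:ℝ) * a n)⁻¹ := by
      filter_upwards [ha0.eventually_lt_const (show (0:ℝ) < z/2 by linarith),
        hna.eventually_ge_atTop 2, eventually_ge_atTop 1] with n han hna2 hn1
      have hn : (0:ℝ) < n := by exact_mod_cast hn1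
      have hA : (0:ℝ) < (n:ℝ) * a n := by have := ha n; positivity
      set b : ℝ := (n:ℝ) * (z - a n) with hb
      have hb2 : (2:ℝ) ≤ b := by
        have h' : (n:ℝ) * a n ≤ b := by rw [hb]; nlinarith
        linarith
      have hbpos : (0:ℝ) < b := by linarith
      set k : ℕ := ⌊(n:ℝ) * z⌋₊ with hk
      set m : ℕ := ⌈b⌉₊ with hm
      have hnz : (0:ℝ) ≤ (n:ℝ) * z := by positivity
      have hfilter : (Finset.Icc 1 n).filter
          (fun j : ℕ => (z - (j:ℝ)/(n:ℝ)) ∈ Set.Icc (0:ℝ) (a n)) = Finset.Icc m k := by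
        ext j
        simp only [Finset.mem_filter, Finset.mem_Icc, Set.mem_Icc]
        constructor
        · rintro ⟨⟨hj1, hjn⟩, h1, h2⟩
          constructor
          · rw [hm, Nat.ceil_le, hb]
            have h' : z - a n ≤ (j:ℝ)/n := by linarith
            calc (n:ℝ) * (z - a n) ≤ (n:ℝ) * ((j:ℝ)/n) :=
                  mul_le_mul_of_nonneg_left h' hn.le
              _ = j := by field_simp
          · rw [hk, Nat.le_floor_iff hnz]
            have h' : (j:ℝ)/n ≤ z := by linarith
            calc (j:ℝ) = (n:ℝ) * ((j:ℝ)/n) := by field_simp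
              _ ≤ (n:ℝ) * z := mul_le_mul_of_nonneg_left h' hn.le
        · rintro ⟨hmj, hjk⟩
          have hj1 : 1 ≤ j := le_trans (Nat.one_le_ceil_iff.2 hbpos) hmj
          have hjn : j ≤ n := by
            refine le_trans hjk ?_
            calc k ≤ ⌊(n:ℝ)⌋₊ := Nat.floor_le_floor (by nlinarith)
              _ = n := Nat.floor_natCast n
          refine ⟨⟨hj1, hjn⟩, ?_, ?_⟩
          · have h1 : (j:ℝ) ≤ (n:ℝ) * z := by
              rw [hk, Nat.le_floor_iff hnz] at hjk; exact hjk
            have h2 : (j:ℝ)/n ≤ z := by rw [div_le_iff₀ hn]; linarith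
            linarith
          · have hbj : b ≤ (j:ℝ) := le_trans (Nat.le_ceil b) (by exact_mod_cast hmj)
            have h2 : z - a n ≤ (j:ℝ)/n := by
              rw [le_div_iff₀ hn]; rw [hb] at hbj; linarith
            linarith
      have hkR : (n:ℝ) * z - 1 < (k:ℝ) := Nat.sub_one_lt_floor _
      have hkR' : (k:ℝ) ≤ (n:ℝ) * z := Nat.floor_le hnz
      have hmR : b ≤ (m:ℝ) := Nat.le_ceil b
      have hmR' : (m:ℝ) < b + 1 := Nat.ceil_lt_add_one hbpos.le
      have hnanb : (n:ℝ) * z - b = (n:ℝ) * a n := by rw [hb]; ring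
      have hmk : m ≤ k + 1 := by
        have h2 : (m:ℝ) < ((k:ℝ) + 1) + 1 := by linarith
        have h3 : m < k + 2 := by exact_mod_cast h2
        omega
      have hcardval : (((Finset.Icc m k).card : ℝ)) = (k:ℝ) + 1 - (m:ℝ) := by
        rw [Nat.card_Icc, Nat.cast_sub hmk]
        push_cast; ring
      have hfA : (1 - ((n:ℝ)*a n)⁻¹) * ((n:ℝ)*a n) = (n:ℝ)*a n - 1 := by
        rw [sub_mul, inv_mul_cancel₀ hA.ne', one_mul]
      have hfA' : (1 + ((n:ℝ)*a n)⁻¹) * ((n:ℝ)*a n) = (n:ℝ)*a n + 1 := by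
        rw [add_mul, inv_mul_cancel₀ hA.ne', one_mul]
      rw [convDensity_eq_card a ha n z, hfilter, hcardval]
      constructor
      · rw [le_div_iff₀ hA, hfA]; linarith
      · rw [div_le_iff₀ hA, hfA']; linarith
    exact tendsto_of_tendsto_of_tendsto_of_le_of_le' hlow hhigh
      (hbound.mono fun n h => h.1) (hbound.mono fun n h => h.2)
  · -- z > 1
    have htarget : Set.indicator (Set.Ioc (0 : ℝ) 1) (fun _ => (1 : ℝ)) z = 0 :=
      Set.indicator_of_notMem (by simp [hz1.not_ge]) _
    rw [htarget]
    have hev : ∀ᶠ n in atTop, convDensity a n z = 0 := by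
      filter_upwards [ha0.eventually_lt_const (show (0:ℝ) < z - 1 by linarith),
        eventually_ge_atTop 1] with n han hn1
      unfold convDensity
      rw [Finset.sum_eq_zero, mul_zero]
      intro j hj
      rw [Finset.mem_Icc] at hj
      have hn : (0:ℝ) < n := by exact_mod_cast hn1
      apply Set.indicator_of_notMem
      rw [Set.mem_Icc]
      push_neg
      intro _
      have hjn : (j:ℝ)/n ≤ 1 := by
        rw [div_le_one hn]; exact_mod_cast hj.2
      linarith
    exact Tendsto.congr' (hev.mono fun n h => h.symm) tendsto_const_nhds

lemma g_integrable : Integrable (Set.indicator (Set.Ioc (0:ℝ) 1) (fun _ => (1:ℝ))) := by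
  rw [integrable_indicator_iff measurableSet_Ioc]
  exact integrableOn_const (by simp [Real.volume_Ioc])

lemma g_integral : ∫ z, Set.indicator (Set.Ioc (0:ℝ) 1) (fun _ => (1:ℝ)) z = 1 := by
  rw [integral_indicator_const _ measurableSet_Ioc]
  simp [Real.volume_Ioc]

lemma g_nonneg (z : ℝ) : 0 ≤ Set.indicator (Set.Ioc (0:ℝ) 1) (fun _ => (1:ℝ)) z :=
  Set.indicator_nonneg (fun _ _ => zero_le_one) z

lemma abs_sub_eq (x y : ℝ) : |x - y| = x + y - 2 * min x y := by
  rcases le_total x y with h | h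
  · rw [abs_of_nonpos (by linarith), min_eq_left h]; ring
  · rw [abs_of_nonneg (by linarith), min_eq_right h]; ring

theorem stmt11_aux (a : ℕ → ℝ) (hapos : ∀ n, 0 < a n)
    (ha0 : Tendsto a atTop (nhds 0))
    (hna : Tendsto (fun n : ℕ => (n : ℝ) * a n) atTop atTop) :
    (∀ z : ℝ, Tendsto (fun n => convDensity a n z) atTop
        (nhds (Set.indicator (Set.Ioc (0 : ℝ) 1) (fun _ => (1 : ℝ)) z))) ∧
    Tendsto (fun n => ∫ z : ℝ,
        |convDensity a n z - Set.indicator (Set.Ioc (0 : ℝ) 1) (fun _ => (1 : ℝ)) z|)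
      atTop (nhds 0) := by
  set g : ℝ → ℝ := Set.indicator (Set.Ioc (0:ℝ) 1) (fun _ => (1:ℝ)) with hg
  have hpt : ∀ z : ℝ, Tendsto (fun n => convDensity a n z) atTop (nhds (g z)) :=
    convDensity_tendsto a hapos ha0 hna
  refine ⟨hpt, ?_⟩
  -- min functions
  have hmin_meas : ∀ n : ℕ, AEStronglyMeasurable
      (fun z => min (convDensity a n z) (g z)) volume :=
    fun n => ((convDensity_integrable a n).aemeasurable.min
      g_integrable.aemeasurable).aestronglyMeasurable
  have hmin_le : ∀ n : ℕ, ∀ z : ℝ, ‖min (convDensity a n z) (g z)‖ ≤ g z := by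
    intro n z
    rw [Real.norm_eq_abs, abs_of_nonneg (le_min (convDensity_nonneg a hapos n z) (g_nonneg z))]
    exact min_le_right _ _
  have hmin_int : ∀ n : ℕ, Integrable (fun z => min (convDensity a n z) (g z)) :=
    fun n => Integrable.mono g_integrable (hmin_meas n)
      (Filter.Eventually.of_forall fun z => (hmin_le n z).trans (le_abs_self _))
  have hDCT : Tendsto (fun n => ∫ z, min (convDensity a n z) (g z)) atTop
      (nhds (∫ z, g z)) := by
    apply tendsto_integral_of_dominated_convergence g hmin_meas g_integrable
    · exact fun n => Filter.Eventually.of_forall (hmin_le n)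
    · exact Filter.Eventually.of_forall fun z => by
        simpa [min_self] using (hpt z).min (tendsto_const_nhds (x := g z))
  rw [g_integral] at hDCT
  have heq : ∀ᶠ n : ℕ in atTop,
      (∫ z, |convDensity a n z - g z|) =
        2 - 2 * ∫ z, min (convDensity a n z) (g z) := by
    filter_upwards [eventually_ge_atTop 1] with n hn1
    have h1 : (fun z => |convDensity a n z - g z|) =
        fun z => convDensity a n z + g z - 2 * min (convDensity a n z) (g z) := by
      funext z; exact abs_sub_eq _ _
    rw [h1]
    have hint1 : Integrable (fun z => convDensity a n z + g z) :=
      (convDensity_integrable a n).add g_integrable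
    have hint2 : Integrable (fun z => 2 * min (convDensity a n z) (g z)) :=
      (hmin_int n).const_mul 2
    rw [integral_sub hint1 hint2,
      integral_add (convDensity_integrable a n) g_integrable,
      MeasureTheory.integral_const_mul,
      convDensity_integral a hapos n hn1, g_integral]
    ring
  have hlim : Tendsto (fun n => 2 - 2 * ∫ z, min (convDensity a n z) (g z)) atTop
      (nhds 0) := by
    have := (tendsto_const_nhds (x := (2:ℝ)) (f := atTop (α := ℕ))).sub
      (hDCT.const_mul 2)
    simpa using this
  exact Tendsto.congr' (heq.mono fun n h => h.symm) hlim

theorem stmt11 (a : ℕ → ℝ) (hapos : ∀ n, 0 < a n)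
    (ha0 : Tendsto a atTop (nhds 0))
    (hna : Tendsto (fun n : ℕ => (n : ℝ) * a n) atTop atTop) :
    (∀ z : ℝ, Tendsto (fun n => convDensity a n z) atTop
        (nhds (Set.indicator (Set.Ioc (0 : ℝ) 1) (fun _ => (1 : ℝ)) z))) ∧
    Tendsto (fun n => ∫ z : ℝ,
        |convDensity a n z - Set.indicator (Set.Ioc (0 : ℝ) 1) (fun _ => (1 : ℝ)) z|)
      atTop (nhds 0) := by
  exact stmt11_aux a hapos ha0 hna
end

section
/- Let ν be a Lévy measure on ℝ^d which on the unit ball has the polar decomposition ν₀(A) = ∫_{S^{d-1}} ∫₀¹ 1_A(rθ) q(r,θ) dr Λ(dθ), where Λ is a finite measure on the unit sphere and q : (0,1] × S^{d-1} → (0,∞). Suppose sup_{θ} |r^{1+α} q(r,θ) - c₀(θ)| → 0 as r → 0 for some α ∈ (0,2) and some c₀ with essinf_Λ c₀ > 0, and suppose m := inf_{|v̄|=1} ∫_{S^{d-1}} ⟨v̄,θ⟩² Λ(dθ) > 0. Then there exist constants c, C > 0 such that for all v ∈ ℝ^d with |v| > C: ∫_{|⟨v,z⟩| ≤ 1} |⟨v,z⟩|²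 ν(dz) ≥ c|v|^α. -/
set_option maxHeartbeats 1000000


open MeasureTheory
open scoped RealInnerProductSpace ENNReal

theorem stmt12 {d : ℕ}
    (ν Λ : Measure (EuclideanSpace ℝ (Fin d))) [IsFiniteMeasure Λ]
    (hΛsphere : Λ {θ : EuclideanSpace ℝ (Fin d) | ‖θ‖ ≠ 1} = 0)
    (q : ℝ → EuclideanSpace ℝ (Fin d) → ℝ)
    (hq : ∀ r ∈ Set.Ioc (0 : ℝ) 1, ∀ θ : EuclideanSpace ℝ (Fin d), ‖θ‖ = 1 → 0 < q r θ)
    (α : ℝ) (hα : α ∈ Set.Ioo (0 : ℝ) 2)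
    (c₀ : EuclideanSpace ℝ (Fin d) → ℝ)
    (hconv : ∀ η > (0 : ℝ), ∃ r₀ > (0 : ℝ), ∀ r ∈ Set.Ioo (0 : ℝ) r₀,
      ∀ θ : EuclideanSpace ℝ (Fin d), ‖θ‖ = 1 → |r ^ (1 + α) * q r θ - c₀ θ| < η)
    (hessinf : ∃ c > (0 : ℝ), ∀ᵐ θ ∂Λ, c ≤ c₀ θ)
    (hpolar : ∀ A : Set (EuclideanSpace ℝ (Fin d)), MeasurableSet A →
      A ⊆ {z : EuclideanSpace ℝ (Fin d) | 0 < ‖z‖ ∧ ‖z‖ ≤ 1} →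
      ν A = ∫⁻ θ, (∫⁻ r in Set.Ioc (0 : ℝ) 1,
        Set.indicator A (fun _ => (1 : ℝ≥0∞)) (r • θ) * ENNReal.ofReal (q r θ)) ∂Λ)
    (hm : ∃ m > (0 : ℝ), ∀ v : EuclideanSpace ℝ (Fin d), ‖v‖ = 1 →
      m ≤ ∫ θ, ⟪v, θ⟫ ^ 2 ∂Λ) :
    ∃ c > (0 : ℝ), ∃ C > (0 : ℝ), ∀ v : EuclideanSpace ℝ (Fin d), C < ‖v‖ →
      ENNReal.ofReal (c * ‖v‖ ^ α) ≤
        ∫⁻ z in {z : EuclideanSpace ℝ (Fin d) | |⟪v, z⟫| ≤ 1},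
          ENNReal.ofReal (⟪v, z⟫ ^ 2) ∂ν := by
  obtain ⟨ε, hε, hc₀⟩ := hessinf
  obtain ⟨m, hm0, hmI⟩ := hm
  obtain ⟨r₀, hr₀, hconv'⟩ := hconv (ε / 2) (by positivity)
  set Λu : ℝ := (Λ Set.univ).toReal with hΛu
  have hΛu0 : 0 ≤ Λu := ENNReal.toReal_nonneg
  set M : ℝ := max Λu 1 with hM
  have hM1 : (1 : ℝ) ≤ M := le_max_right _ _
  have hM0 : (0 : ℝ) < M := lt_of_lt_of_le one_pos hM1
  set s : ℝ := m / (2 * M) with hs_def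
  have hs : 0 < s := by positivity
  have hα0 : (0 : ℝ) < α := hα.1
  refine ⟨s * ε * m / 32, by positivity, max 1 (1 / r₀), by positivity, ?_⟩
  intro v hv
  have hv1 : (1 : ℝ) < ‖v‖ := lt_of_le_of_lt (le_max_left _ _) hv
  have hv0 : (0 : ℝ) < ‖v‖ := lt_trans one_pos hv1
  have hvr : 1 / ‖v‖ < r₀ := by
    rw [div_lt_iff₀ hv0]
    have : 1 / r₀ < ‖v‖ := lt_of_le_of_lt (le_max_right _ _) hv
    rw [div_lt_iff₀ hr₀] at this
    linarith [mul_comm r₀ ‖v‖]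
  have hinv1 : 1 / ‖v‖ ≤ 1 := by
    rw [div_le_one hv0]; exact le_of_lt hv1
  set vb : EuclideanSpace ℝ (Fin d) := ‖v‖⁻¹ • v with hvb_def
  have hvb : ‖vb‖ = 1 := by
    rw [hvb_def, norm_smul, norm_inv, norm_norm, inv_mul_cancel₀ (ne_of_gt hv0)]
  have hinner_vb : ∀ θ, ⟪vb, θ⟫ = ‖v‖⁻¹ * ⟪v, θ⟫ := by
    intro θ; rw [hvb_def, real_inner_smul_left]
  have hinner_meas : Measurable fun θ : EuclideanSpace ℝ (Fin d) => ⟪vb, θ⟫ :=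
    (continuous_const.inner continuous_id).measurable
  set Θ : Set (EuclideanSpace ℝ (Fin d)) := {θ | s ≤ ⟪vb, θ⟫ ^ 2} with hΘ_def
  have hΘm : MeasurableSet Θ :=
    measurableSet_le measurable_const ((hinner_meas.pow_const 2))
  have hae1 : ∀ᵐ θ ∂Λ, ‖θ‖ = 1 := by
    rw [ae_iff]; exact hΛsphere
  -- Λ Θ ≥ m/2
  have hΛΘ : ENNReal.ofReal (m / 2) ≤ Λ Θ := by
    have hg_int : Integrable (fun θ => ⟪vb, θ⟫ ^ 2) Λ := by
      refine ⟨(hinner_meas.pow_const 2).aestronglyMeasurable, ?_⟩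
      refine HasFiniteIntegral.of_bounded (C := 1) ?_
      filter_upwards [hae1] with θ h1
      have := abs_real_inner_le_norm vb θ
      rw [hvb, h1, mul_one] at this
      rw [Real.norm_eq_abs, abs_pow, sq_abs]
      nlinarith [abs_nonneg ⟪vb, θ⟫, sq_abs ⟪vb, θ⟫]
    have hh_int : Integrable (fun θ => s + Θ.indicator (fun _ => (1 : ℝ)) θ) Λ :=
      (integrable_const s).add ((integrable_const (1 : ℝ)).indicator hΘm)
    have hgh : (fun θ => ⟪vb, θ⟫ ^ 2) ≤ᵐ[Λ] fun θ => s + Θ.indicator (fun _ => (1 : ℝ)) θ := by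
      filter_upwards [hae1] with θ h1
      by_cases hθ : θ ∈ Θ
      · have := abs_real_inner_le_norm vb θ
        rw [hvb, h1, mul_one] at this
        rw [Set.indicator_of_mem hθ]
        nlinarith [abs_nonneg ⟪vb, θ⟫, sq_abs ⟪vb, θ⟫]
      · rw [Set.indicator_of_notMem hθ]
        have : ⟪vb, θ⟫ ^ 2 < s := not_le.mp hθ
        linarith
    have hint : ∫ θ, (s + Θ.indicator (fun _ => (1 : ℝ)) θ) ∂Λ = s * Λu + (Λ Θ).toReal := by
      rw [integral_add (integrable_const s) ((integrable_const (1 : ℝ)).indicator hΘm),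
        integral_const, integral_indicator_const _ hΘm]
      simp [hΛu, mul_comm]; rfl
    have h1 : m ≤ s * Λu + (Λ Θ).toReal := by
      calc m ≤ ∫ θ, ⟪vb, θ⟫ ^ 2 ∂Λ := hmI vb hvb
        _ ≤ ∫ θ, (s + Θ.indicator (fun _ => (1 : ℝ)) θ) ∂Λ := integral_mono_ae hg_int hh_int hgh
        _ = s * Λu + (Λ Θ).toReal := hint
    have hsΛu : s * Λu ≤ m / 2 := by
      rw [hs_def]
      rw [div_mul_eq_mul_div, div_le_div_iff₀ (by positivity) two_pos]
      have : Λu ≤ M := le_max_left _ _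
      nlinarith
    have h2 : m / 2 ≤ (Λ Θ).toReal := by linarith
    calc ENNReal.ofReal (m / 2) ≤ ENNReal.ofReal (Λ Θ).toReal := ENNReal.ofReal_le_ofReal h2
      _ ≤ Λ Θ := ENNReal.ofReal_toReal_le
  -- the set B
  set B : Set (EuclideanSpace ℝ (Fin d)) :=
    {z | 1 / (2 * ‖v‖) ≤ ‖z‖ ∧ ‖z‖ ≤ 1 / ‖v‖ ∧ s * (‖z‖ ^ 2 * ‖v‖ ^ 2) ≤ ⟪v, z⟫ ^ 2}
    with hB_def
  have hBmeas : MeasurableSet B := by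
    apply MeasurableSet.inter
    · exact measurableSet_le measurable_const continuous_norm.measurable
    apply MeasurableSet.inter
    · exact measurableSet_le continuous_norm.measurable measurable_const
    · exact measurableSet_le
        (((measurable_norm.pow_const 2).mul_const (‖v‖ ^ 2)).const_mul s)
        (((continuous_const.inner continuous_id : Continuous fun z :
          EuclideanSpace ℝ (Fin d) => ⟪v, z⟫).measurable).pow_const 2)
  have hBsubD : B ⊆ {z : EuclideanSpace ℝ (Fin d) | |⟪v, z⟫| ≤ 1} := by
    intro z hz
    have h2 : ‖z‖ ≤ 1 / ‖v‖ := hz.2.1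
    have := abs_real_inner_le_norm v z
    have : |⟪v, z⟫| ≤ ‖v‖ * (1 / ‖v‖) := le_trans this
      (mul_le_mul_of_nonneg_left h2 (norm_nonneg v))
    rwa [mul_one_div, div_self (ne_of_gt hv0)] at this
  have hBsub : B ⊆ {z : EuclideanSpace ℝ (Fin d) | 0 < ‖z‖ ∧ ‖z‖ ≤ 1} := by
    intro z hz
    refine ⟨lt_of_lt_of_le (by positivity) hz.1, le_trans hz.2.1 hinv1⟩
  -- step 1 : ofReal (s/4) * ν B ≤ target integral
  have step1 : ENNReal.ofReal (s / 4) * ν B ≤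
      ∫⁻ z in {z : EuclideanSpace ℝ (Fin d) | |⟪v, z⟫| ≤ 1},
        ENNReal.ofReal (⟪v, z⟫ ^ 2) ∂ν := by
    have heq : ENNReal.ofReal (s / 4) * ν B =
        ∫⁻ z in {z : EuclideanSpace ℝ (Fin d) | |⟪v, z⟫| ≤ 1},
          B.indicator (fun _ => ENNReal.ofReal (s / 4)) z ∂ν := by
      rw [lintegral_indicator hBmeas _, setLIntegral_const,
        Measure.restrict_apply hBmeas, Set.inter_eq_left.mpr hBsubD]
    rw [heq]
    apply lintegral_mono
    intro z
    by_cases hz : z ∈ B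
    · rw [Set.indicator_of_mem hz]
      apply ENNReal.ofReal_le_ofReal
      have h1 : 1 / (2 * ‖v‖) ≤ ‖z‖ := hz.1
      have h3 : s * (‖z‖ ^ 2 * ‖v‖ ^ 2) ≤ ⟪v, z⟫ ^ 2 := hz.2.2
      have hz2 : (1 / (2 * ‖v‖)) ^ 2 ≤ ‖z‖ ^ 2 := by
        apply pow_le_pow_left₀ (by positivity) h1
      have : s * ((1 / (2 * ‖v‖)) ^ 2 * ‖v‖ ^ 2) ≤ ⟪v, z⟫ ^ 2 := by
        refine le_trans (mul_le_mul_of_nonneg_left ?_ (le_of_lt hs)) h3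
        exact mul_le_mul_of_nonneg_right hz2 (by positivity)
      have hcalc : s * ((1 / (2 * ‖v‖)) ^ 2 * ‖v‖ ^ 2) = s / 4 := by
        field_simp; ring
      linarith [hcalc ▸ this]
    · rw [Set.indicator_of_notMem hz]; exact zero_le
  -- step 3 : lower bound for ν B
  have step3 : ENNReal.ofReal (ε / 4 * ‖v‖ ^ α) * Λ Θ ≤ ν B := by
    rw [hpolar B hBmeas hBsub]
    have hKey : ∀ᵐ θ ∂Λ, Θ.indicator (fun _ => ENNReal.ofReal (ε / 4 * ‖v‖ ^ α)) θ ≤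
        ∫⁻ r in Set.Ioc (0 : ℝ) 1,
          Set.indicator B (fun _ => (1 : ℝ≥0∞)) (r • θ) * ENNReal.ofReal (q r θ) := by
      filter_upwards [hae1, hc₀] with θ h1 hcθ
      by_cases hθ : θ ∈ Θ
      swap
      · rw [Set.indicator_of_notMem hθ]; exact zero_le
      rw [Set.indicator_of_mem hθ]
      have hsub : Set.Ioc (1 / (2 * ‖v‖)) (1 / ‖v‖) ⊆ Set.Ioc (0 : ℝ) 1 := by
        intro r hr
        exact ⟨lt_of_le_of_lt (by positivity) hr.1, le_trans hr.2 hinv1⟩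
      have hKr : ∀ r : ℝ, (Set.Ioc (1 / (2 * ‖v‖)) (1 / ‖v‖)).indicator
          (fun _ => ENNReal.ofReal (ε / 2 * ‖v‖ ^ (1 + α))) r ≤
          Set.indicator B (fun _ => (1 : ℝ≥0∞)) (r • θ) * ENNReal.ofReal (q r θ) := by
        intro r
        by_cases hr : r ∈ Set.Ioc (1 / (2 * ‖v‖)) (1 / ‖v‖)
        swap
        · rw [Set.indicator_of_notMem hr]; exact zero_le
        rw [Set.indicator_of_mem hr]
        have hr0 : 0 < r := lt_of_le_of_lt (by positivity) hr.1
        have hr1 : r ≤ 1 := le_trans hr.2 hinv1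
        -- q lower bound
        have hrr₀ : r < r₀ := lt_of_le_of_lt hr.2 hvr
        have hconv'' := hconv' r ⟨hr0, hrr₀⟩ θ h1
        have hq0 : 0 < q r θ := hq r ⟨hr0, hr1⟩ θ h1
        have hql : ε / 2 ≤ r ^ (1 + α) * q r θ := by
          have := abs_lt.mp hconv''
          linarith [this.1]
        have hrle : r ^ (1 + α) ≤ (1 / ‖v‖) ^ (1 + α) :=
          Real.rpow_le_rpow (le_of_lt hr0) hr.2 (by linarith)
        have hpow : (1 / ‖v‖ : ℝ) ^ (1 + α) = (‖v‖ ^ (1 + α))⁻¹ := by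
          rw [one_div, Real.inv_rpow (norm_nonneg v)]
        have hvpow : (0 : ℝ) < ‖v‖ ^ (1 + α) := Real.rpow_pos_of_pos hv0 _
        have hqb : ε / 2 * ‖v‖ ^ (1 + α) ≤ q r θ := by
          have h5 : ε / 2 ≤ (‖v‖ ^ (1 + α))⁻¹ * q r θ := by
            calc ε / 2 ≤ r ^ (1 + α) * q r θ := hql
              _ ≤ (1 / ‖v‖) ^ (1 + α) * q r θ :=
                  mul_le_mul_of_nonneg_right hrle (le_of_lt hq0)
              _ = (‖v‖ ^ (1 + α))⁻¹ * q r θ := by rw [hpow]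
          calc ε / 2 * ‖v‖ ^ (1 + α) ≤ ((‖v‖ ^ (1 + α))⁻¹ * q r θ) * ‖v‖ ^ (1 + α) :=
                mul_le_mul_of_nonneg_right h5 (le_of_lt hvpow)
            _ = q r θ := by field_simp
        -- r • θ ∈ B
        have hmem : r • θ ∈ B := by
          have hnorm : ‖r • θ‖ = r := by
            rw [norm_smul, h1, mul_one, Real.norm_eq_abs, abs_of_pos hr0]
          refine ⟨by rw [hnorm]; exact le_of_lt hr.1, by rw [hnorm]; exact hr.2, ?_⟩
          have hip : ⟪v, r • θ⟫ = r * ⟪v, θ⟫ := real_inner_smul_right v θ r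
          have hvbip : ⟪vb, θ⟫ = ‖v‖⁻¹ * ⟪v, θ⟫ := hinner_vb θ
          have hθΘ : s ≤ ⟪vb, θ⟫ ^ 2 := hθ
          rw [hvbip] at hθΘ
          rw [hnorm, hip]
          have hv2 : (0:ℝ) < ‖v‖ ^ 2 := by positivity
          have : s * ‖v‖ ^ 2 ≤ ⟪v, θ⟫ ^ 2 := by
            have := mul_le_mul_of_nonneg_right hθΘ (le_of_lt hv2)
            calc s * ‖v‖ ^ 2 ≤ (‖v‖⁻¹ * ⟪v, θ⟫) ^ 2 * ‖v‖ ^ 2 := this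
              _ = ⟪v, θ⟫ ^ 2 := by
                  field_simp
          nlinarith [sq_nonneg r]
        rw [Set.indicator_of_mem hmem, one_mul]
        exact ENNReal.ofReal_le_ofReal hqb
      calc ENNReal.ofReal (ε / 4 * ‖v‖ ^ α)
          = ∫⁻ r in Set.Ioc (0 : ℝ) 1, (Set.Ioc (1 / (2 * ‖v‖)) (1 / ‖v‖)).indicator
              (fun _ => ENNReal.ofReal (ε / 2 * ‖v‖ ^ (1 + α))) r := by
            rw [lintegral_indicator measurableSet_Ioc _, setLIntegral_const,
              Measure.restrict_apply measurableSet_Ioc,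
              Set.inter_eq_left.mpr hsub, Real.volume_Ioc]
            rw [← ENNReal.ofReal_mul (by positivity)]
            congr 1
            have hlen : 1 / ‖v‖ - 1 / (2 * ‖v‖) = 1 / (2 * ‖v‖) := by
              field_simp; ring
            rw [hlen]
            have hsplit : ‖v‖ ^ (1 + α) = ‖v‖ * ‖v‖ ^ α := by
              rw [Real.rpow_add hv0, Real.rpow_one]
            rw [hsplit]
            field_simp
            ring
        _ ≤ ∫⁻ r in Set.Ioc (0 : ℝ) 1,
              Set.indicator B (fun _ => (1 : ℝ≥0∞)) (r • θ) * ENNReal.ofReal (q r θ) :=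
            lintegral_mono hKr
    calc ENNReal.ofReal (ε / 4 * ‖v‖ ^ α) * Λ Θ
        = ∫⁻ θ, Θ.indicator (fun _ => ENNReal.ofReal (ε / 4 * ‖v‖ ^ α)) θ ∂Λ := by
          rw [lintegral_indicator hΘm _, setLIntegral_const]
      _ ≤ _ := lintegral_mono_ae hKey
  -- combine
  have hfinal : ENNReal.ofReal (s * ε * m / 32 * ‖v‖ ^ α) ≤
      ENNReal.ofReal (s / 4) * (ENNReal.ofReal (ε / 4 * ‖v‖ ^ α) * ENNReal.ofReal (m / 2)) := by
    rw [← ENNReal.ofReal_mul (by positivity), ← ENNReal.ofReal_mul (by positivity)]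
    apply ENNReal.ofReal_le_ofReal
    have hvα : (0:ℝ) ≤ ‖v‖ ^ α := Real.rpow_nonneg (norm_nonneg v) α
    nlinarith [Real.rpow_nonneg (norm_nonneg v) α]
  calc ENNReal.ofReal (s * ε * m / 32 * ‖v‖ ^ α)
      ≤ ENNReal.ofReal (s / 4) * (ENNReal.ofReal (ε / 4 * ‖v‖ ^ α) * ENNReal.ofReal (m / 2)) :=
        hfinal
    _ ≤ ENNReal.ofReal (s / 4) * (ENNReal.ofReal (ε / 4 * ‖v‖ ^ α) * Λ Θ) := by
        gcongr
    _ ≤ ENNReal.ofReal (s / 4) * ν B := by gcongr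
    _ ≤ _ := step1
end

section
/- Let ν be a Lévy measure on ℝ^d admitting near the origin the polar decomposition ν(A ∩ B₁(0)) = ∫_{S^{d-1}} ∫₀¹ 1_A(rθ) q(r,θ) dr Λ(dθ) with Λ a finite measure on S^{d-1}, q > 0, c₀ : S^{d-1} → (0,∞) in L¹(Λ), α ∈ (0,2), and sup_θ |r^{1+α} q(r,θ) - c₀(θ)| → 0 as r → 0. Then lim_{h→0⁺} h^{α-2} ∫_{|z| ≤ h} |z|² ν(dz) = (1/(2-α)) ∫_{S^{d-1}} c₀(θ) Λ(dθ), and this limit is strictly positive. -/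
open MeasureTheory Filter
open scoped RealInnerProductSpace ENNReal


private lemma ofReal_max_zero' (x : ℝ) :
    ENNReal.ofReal (max x 0) = ENNReal.ofReal x := by
  rcases le_total x 0 with hx | hx
  · rw [max_eq_right hx, ENNReal.ofReal_of_nonpos hx, ENNReal.ofReal_zero]
  · rw [max_eq_left hx]

private lemma annulus_bound {d : ℕ}
    (ν Λ : Measure (EuclideanSpace ℝ (Fin d)))
    (hΛsphere : Λ {θ : EuclideanSpace ℝ (Fin d) | ‖θ‖ ≠ 1} = 0)
    (q : ℝ → EuclideanSpace ℝ (Fin d) → ℝ)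
    (α : ℝ)
    (c₀ : EuclideanSpace ℝ (Fin d) → ℝ)
    (hc₀pos : ∀ θ : EuclideanSpace ℝ (Fin d), ‖θ‖ = 1 → 0 < c₀ θ)
    (hc₀m : AEMeasurable c₀ Λ)
    (η : ℝ) (hη : 0 < η) (r₀ : ℝ)
    (hr₀ : ∀ r ∈ Set.Ioo (0 : ℝ) r₀, ∀ θ : EuclideanSpace ℝ (Fin d), ‖θ‖ = 1 →
      |r ^ (1 + α) * q r θ - c₀ θ| < η)
    (hpolar : ∀ A : Set (EuclideanSpace ℝ (Fin d)), MeasurableSet A →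
      A ⊆ {z : EuclideanSpace ℝ (Fin d) | 0 < ‖z‖ ∧ ‖z‖ ≤ 1} →
      ν A = ∫⁻ θ, (∫⁻ r in Set.Ioc (0 : ℝ) 1,
        Set.indicator A (fun _ => (1 : ℝ≥0∞)) (r • θ) * ENNReal.ofReal (q r θ)) ∂Λ)
    (b a : ℝ) (hb : 0 < b) (hba : b ≤ a) (ha1 : a ≤ 1) (har₀ : a < r₀) :
    (∫⁻ θ, ENNReal.ofReal (c₀ θ - η) ∂Λ) *
        (∫⁻ r in Set.Ioc b a, ENNReal.ofReal (r ^ (-(1 + α))))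
      ≤ ν {z : EuclideanSpace ℝ (Fin d) | b < ‖z‖ ∧ ‖z‖ ≤ a} ∧
    ν {z : EuclideanSpace ℝ (Fin d) | b < ‖z‖ ∧ ‖z‖ ≤ a}
      ≤ (∫⁻ θ, ENNReal.ofReal (c₀ θ + η) ∂Λ) *
        (∫⁻ r in Set.Ioc b a, ENNReal.ofReal (r ^ (-(1 + α)))) := by
  classical
  set S : Set (EuclideanSpace ℝ (Fin d)) :=
    {z : EuclideanSpace ℝ (Fin d) | b < ‖z‖ ∧ ‖z‖ ≤ a} with hSdef
  set J : ℝ≥0∞ := ∫⁻ r in Set.Ioc b a, ENNReal.ofReal (r ^ (-(1 + α))) with hJdef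
  have hSm : MeasurableSet S := by
    have : S = (fun z : EuclideanSpace ℝ (Fin d) => ‖z‖) ⁻¹' Set.Ioc b a := rfl
    rw [this]
    exact measurable_norm measurableSet_Ioc
  have hsub : S ⊆ {z : EuclideanSpace ℝ (Fin d) | 0 < ‖z‖ ∧ ‖z‖ ≤ 1} :=
    fun z hz => ⟨hb.trans hz.1, hz.2.trans ha1⟩
  have aesph : ∀ᵐ θ ∂Λ, ‖θ‖ = 1 := by
    rw [ae_iff]; exact hΛsphere
  rw [hpolar S hSm hsub]
  have key : ∀ θ : EuclideanSpace ℝ (Fin d), ‖θ‖ = 1 →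
      ENNReal.ofReal (c₀ θ - η) * J ≤
        (∫⁻ r in Set.Ioc (0 : ℝ) 1,
          Set.indicator S (fun _ => (1 : ℝ≥0∞)) (r • θ) * ENNReal.ofReal (q r θ)) ∧
      (∫⁻ r in Set.Ioc (0 : ℝ) 1,
          Set.indicator S (fun _ => (1 : ℝ≥0∞)) (r • θ) * ENNReal.ofReal (q r θ)) ≤
        ENNReal.ofReal (c₀ θ + η) * J := by
    intro θ hθ
    have hmemS : ∀ r : ℝ, 0 < r → (r • θ ∈ S ↔ r ∈ Set.Ioc b a) := by
      intro r hr
      have hn : ‖r • θ‖ = r := by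
        rw [norm_smul, hθ, mul_one, Real.norm_eq_abs, abs_of_pos hr]
      simp only [hSdef, Set.mem_setOf_eq, Set.mem_Ioc, hn]
    have hqb : ∀ r ∈ Set.Ioc b a,
        (c₀ θ - η) * r ^ (-(1 + α)) ≤ q r θ ∧ q r θ ≤ (c₀ θ + η) * r ^ (-(1 + α)) := by
      intro r hr
      have hrpos : 0 < r := hb.trans hr.1
      have hrp : 0 < r ^ (1 + α) := Real.rpow_pos_of_pos hrpos _
      have habs := abs_lt.mp (hr₀ r ⟨hrpos, lt_of_le_of_lt hr.2 har₀⟩ θ hθ)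
      have hcomm : q r θ * r ^ (1 + α) = r ^ (1 + α) * q r θ := mul_comm _ _
      have hneg : r ^ (-(1 + α)) = (r ^ (1 + α))⁻¹ := Real.rpow_neg hrpos.le _
      constructor
      · have h1 : (c₀ θ - η) / r ^ (1 + α) ≤ q r θ := by
          rw [div_le_iff₀ hrp]
          linarith [habs.1]
        rw [hneg, ← div_eq_mul_inv]; exact h1
      · have h1 : q r θ ≤ (c₀ θ + η) / r ^ (1 + α) := by
          rw [le_div_iff₀ hrp]
          linarith [habs.2]
        rw [hneg, ← div_eq_mul_inv]; exact h1
    have hmg : Measurable fun r : ℝ => ENNReal.ofReal (r ^ (-(1 + α))) := by fun_prop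
    have hindint : ∀ c : ℝ,
        (∫⁻ r in Set.Ioc (0 : ℝ) 1,
          (Set.Ioc b a).indicator
            (fun r => ENNReal.ofReal c * ENNReal.ofReal (r ^ (-(1 + α)))) r)
        = ENNReal.ofReal c * J := by
      intro c
      rw [lintegral_indicator measurableSet_Ioc,
        Measure.restrict_restrict measurableSet_Ioc,
        Set.inter_eq_left.mpr (Set.Ioc_subset_Ioc hb.le ha1)]
      exact lintegral_const_mul' _ _ ENNReal.ofReal_ne_top
    constructor
    · rw [← hindint (c₀ θ - η)]
      apply lintegral_mono
      intro r
      dsimp only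
      by_cases hrab : r ∈ Set.Ioc b a
      · have hrpos : 0 < r := hb.trans hrab.1
        have hmem : r • θ ∈ S := (hmemS r hrpos).mpr hrab
        rw [Set.indicator_of_mem hrab, Set.indicator_of_mem hmem, one_mul]
        rcases le_total (c₀ θ - η) 0 with hc | hc
        · rw [ENNReal.ofReal_of_nonpos hc, zero_mul]; exact zero_le
        · rw [← ENNReal.ofReal_mul hc]
          exact ENNReal.ofReal_le_ofReal ((hqb r hrab).1)
      · rw [Set.indicator_of_notMem hrab]; exact zero_le
    · rw [← hindint (c₀ θ + η)]
      apply setLIntegral_mono (Measurable.indicator (measurable_const.mul hmg) measurableSet_Ioc)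
      intro r hr
      by_cases hmem : r • θ ∈ S
      · have hrab : r ∈ Set.Ioc b a := (hmemS r hr.1).mp hmem
        have hc : (0:ℝ) ≤ c₀ θ + η := by linarith [hc₀pos θ hθ]
        rw [Set.indicator_of_mem hmem, Set.indicator_of_mem hrab, one_mul]
        dsimp only [Pi.mul_apply]
        rw [← ENNReal.ofReal_mul hc]
        exact ENNReal.ofReal_le_ofReal ((hqb r hrab).2)
      · rw [Set.indicator_of_notMem hmem, zero_mul]; exact zero_le
  constructor
  · calc (∫⁻ θ, ENNReal.ofReal (c₀ θ - η) ∂Λ) * J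
        = ∫⁻ θ, ENNReal.ofReal (c₀ θ - η) * J ∂Λ :=
          (lintegral_mul_const'' J
            (ENNReal.measurable_ofReal.comp_aemeasurable (hc₀m.sub aemeasurable_const))).symm
      _ ≤ _ := lintegral_mono_ae (aesph.mono fun θ hθ => (key θ hθ).1)
  · calc (∫⁻ θ, (∫⁻ r in Set.Ioc (0 : ℝ) 1,
          Set.indicator S (fun _ => (1 : ℝ≥0∞)) (r • θ) * ENNReal.ofReal (q r θ)) ∂Λ)
        ≤ ∫⁻ θ, ENNReal.ofReal (c₀ θ + η) * J ∂Λ :=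
          lintegral_mono_ae (aesph.mono fun θ hθ => (key θ hθ).2)
      _ = _ := lintegral_mul_const'' J
          (ENNReal.measurable_ofReal.comp_aemeasurable (hc₀m.add aemeasurable_const))

private lemma F_bound {d : ℕ}
    (ν Λ : Measure (EuclideanSpace ℝ (Fin d)))
    (hΛsphere : Λ {θ : EuclideanSpace ℝ (Fin d) | ‖θ‖ ≠ 1} = 0)
    (q : ℝ → EuclideanSpace ℝ (Fin d) → ℝ)
    (α : ℝ) (hα : α ∈ Set.Ioo (0 : ℝ) 2)
    (c₀ : EuclideanSpace ℝ (Fin d) → ℝ)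
    (hc₀pos : ∀ θ : EuclideanSpace ℝ (Fin d), ‖θ‖ = 1 → 0 < c₀ θ)
    (hc₀m : AEMeasurable c₀ Λ)
    (η : ℝ) (hη : 0 < η) (r₀ : ℝ)
    (hr₀ : ∀ r ∈ Set.Ioo (0 : ℝ) r₀, ∀ θ : EuclideanSpace ℝ (Fin d), ‖θ‖ = 1 →
      |r ^ (1 + α) * q r θ - c₀ θ| < η)
    (hpolar : ∀ A : Set (EuclideanSpace ℝ (Fin d)), MeasurableSet A →
      A ⊆ {z : EuclideanSpace ℝ (Fin d) | 0 < ‖z‖ ∧ ‖z‖ ≤ 1} →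
      ν A = ∫⁻ θ, (∫⁻ r in Set.Ioc (0 : ℝ) 1,
        Set.indicator A (fun _ => (1 : ℝ≥0∞)) (r • θ) * ENNReal.ofReal (q r θ)) ∂Λ)
    (ρ : ℝ) (hρ0 : 0 < ρ) (hρ1 : ρ < 1)
    (h : ℝ) (hh0 : 0 < h) (hh1 : h ≤ 1) (hhr : h < r₀)
    (annulus_bound : ∀ b a : ℝ, 0 < b → b ≤ a → a ≤ 1 → a < r₀ →
      (∫⁻ θ, ENNReal.ofReal (c₀ θ - η) ∂Λ) *
          (∫⁻ r in Set.Ioc b a, ENNReal.ofReal (r ^ (-(1 + α))))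
        ≤ ν {z : EuclideanSpace ℝ (Fin d) | b < ‖z‖ ∧ ‖z‖ ≤ a} ∧
      ν {z : EuclideanSpace ℝ (Fin d) | b < ‖z‖ ∧ ‖z‖ ≤ a}
        ≤ (∫⁻ θ, ENNReal.ofReal (c₀ θ + η) ∂Λ) *
          (∫⁻ r in Set.Ioc b a, ENNReal.ofReal (r ^ (-(1 + α))))) :
    (∫⁻ θ, ENNReal.ofReal (c₀ θ - η) ∂Λ) *
        ENNReal.ofReal (ρ ^ 2 * (h ^ (2 - α) / (2 - α)))
      ≤ (∫⁻ z in {z : EuclideanSpace ℝ (Fin d) | ‖z‖ ≤ h}, ENNReal.ofReal (‖z‖ ^ 2) ∂ν) ∧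
    (∫⁻ z in {z : EuclideanSpace ℝ (Fin d) | ‖z‖ ≤ h}, ENNReal.ofReal (‖z‖ ^ 2) ∂ν)
      ≤ (∫⁻ θ, ENNReal.ofReal (c₀ θ + η) ∂Λ) *
        ENNReal.ofReal ((ρ ^ 2)⁻¹ * (h ^ (2 - α) / (2 - α))) := by
  classical
  set Cm : ℝ≥0∞ := ∫⁻ θ, ENNReal.ofReal (c₀ θ - η) ∂Λ with hCmdef
  set Cp : ℝ≥0∞ := ∫⁻ θ, ENNReal.ofReal (c₀ θ + η) ∂Λ with hCpdef
  set a : ℕ → ℝ := fun k => h * ρ ^ k with hadef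
  have ha_pos : ∀ k, 0 < a k := fun k => mul_pos hh0 (pow_pos hρ0 k)
  have ha_le : ∀ k, a k ≤ h := fun k => by
    have : ρ ^ k ≤ 1 := pow_le_one₀ hρ0.le hρ1.le
    calc a k = h * ρ ^ k := rfl
      _ ≤ h * 1 := by nlinarith
      _ = h := mul_one h
  have ha_succ : ∀ k, a (k + 1) = ρ * a k := fun k => by
    show h * ρ ^ (k+1) = ρ * (h * ρ ^ k); rw [pow_succ]; ring
  have ha_anti : ∀ k l : ℕ, k ≤ l → a l ≤ a k := fun k l hkl => by
    have : ρ ^ l ≤ ρ ^ k := pow_le_pow_of_le_one hρ0.le hρ1.le hkl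
    exact mul_le_mul_of_nonneg_left this hh0.le
  set I : ℕ → Set ℝ := fun k => Set.Ioc (a (k + 1)) (a k) with hIdef
  have hIm : ∀ k, MeasurableSet (I k) := fun k => measurableSet_Ioc
  have hIdisj : Pairwise (Function.onFun Disjoint I) := by
    have claim : ∀ k l : ℕ, k < l → Disjoint (I k) (I l) := by
      intro k l hkl
      rw [Set.Ioc_disjoint_Ioc]
      calc min (a k) (a l) ≤ a l := min_le_right _ _
        _ ≤ a (k + 1) := ha_anti _ _ hkl
        _ ≤ max (a (k + 1)) (a (l + 1)) := le_max_left _ _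
    intro k l hkl
    rcases hkl.lt_or_gt with hlt | hlt
    · exact claim k l hlt
    · exact (claim l k hlt).symm
  have hIunion : (⋃ k, I k) = Set.Ioc 0 h := by
    apply Set.eq_of_subset_of_subset
    · intro r hr
      obtain ⟨k, hk⟩ := Set.mem_iUnion.mp hr
      exact ⟨(ha_pos (k + 1)).trans hk.1, hk.2.trans (ha_le k)⟩
    · intro r hr
      have htend : Tendsto a atTop (nhds 0) := by
        have := tendsto_pow_atTop_nhds_zero_of_lt_one hρ0.le hρ1
        simpa [hadef] using (this.const_mul h)
      have hex : ∃ k, a k < r := by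
        have := (htend.eventually (eventually_lt_nhds hr.1)).exists
        simpa using this
      have h0 : ¬ a 0 < r := by
        simp only [hadef, pow_zero, mul_one]
        exact not_lt.mpr hr.2
      set m := Nat.find hex with hm
      have hmlt : a m < r := Nat.find_spec hex
      have hm0 : m ≠ 0 := fun hc => h0 (hc ▸ hmlt)
      obtain ⟨j, hj⟩ := Nat.exists_eq_succ_of_ne_zero hm0
      have hjle : r ≤ a j := by
        have := Nat.find_min hex (m := j) (by omega)
        exact not_lt.mp this
      have hjlt : a (j + 1) < r := by
        have : m = j + 1 := hj
        rwa [this] at hmlt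
      exact Set.mem_iUnion.mpr ⟨j, ⟨hjlt, hjle⟩⟩
  set A : ℕ → Set (EuclideanSpace ℝ (Fin d)) :=
    fun k => {z : EuclideanSpace ℝ (Fin d) | a (k + 1) < ‖z‖ ∧ ‖z‖ ≤ a k} with hAdef
  have hAm : ∀ k, MeasurableSet (A k) := fun k => by
    have : A k = (fun z : EuclideanSpace ℝ (Fin d) => ‖z‖) ⁻¹' Set.Ioc (a (k+1)) (a k) := rfl
    rw [this]; exact measurable_norm measurableSet_Ioc
  have hU : MeasurableSet {z : EuclideanSpace ℝ (Fin d) | ‖z‖ ≤ h} := by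
    have : {z : EuclideanSpace ℝ (Fin d) | ‖z‖ ≤ h}
        = (fun z : EuclideanSpace ℝ (Fin d) => ‖z‖) ⁻¹' Set.Iic h := rfl
    rw [this]; exact measurable_norm measurableSet_Iic
  have hF_eq : (∫⁻ z in {z : EuclideanSpace ℝ (Fin d) | ‖z‖ ≤ h}, ENNReal.ofReal (‖z‖ ^ 2) ∂ν)
      = ∫⁻ z, Set.indicator {z : EuclideanSpace ℝ (Fin d) | ‖z‖ ≤ h}
          (fun z => ENNReal.ofReal (‖z‖ ^ 2)) z ∂ν :=
    (lintegral_indicator hU _).symm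
  have hann := fun k => annulus_bound (a (k + 1)) (a k) (ha_pos (k + 1))
    (ha_anti k (k + 1) (Nat.le_succ k)) ((ha_le k).trans hh1) (lt_of_le_of_lt (ha_le k) hhr)
  set Jk : ℕ → ℝ≥0∞ := fun k => ∫⁻ r in I k, ENNReal.ofReal (r ^ (-(1 + α))) with hJkdef
  -- final integral computation
  have final_int : ∀ c : ℝ, 0 ≤ c →
      (∫⁻ r in Set.Ioc (0 : ℝ) h, ENNReal.ofReal (c * r ^ (1 - α)))
        = ENNReal.ofReal (c * (h ^ (2 - α) / (2 - α))) := by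
    intro c hc
    have hint : IntegrableOn (fun r : ℝ => r ^ (1 - α)) (Set.Ioc 0 h) := by
      have := intervalIntegral.intervalIntegrable_rpow'
        (a := 0) (b := h) (by linarith [hα.2] : (-1:ℝ) < 1 - α)
      rwa [intervalIntegrable_iff, Set.uIoc_of_le hh0.le] at this
    have hci : IntegrableOn (fun r : ℝ => c * r ^ (1 - α)) (Set.Ioc 0 h) := hint.const_mul c
    have hnn : 0 ≤ᵐ[volume.restrict (Set.Ioc 0 h)] fun r : ℝ => c * r ^ (1 - α) :=
      (ae_restrict_mem measurableSet_Ioc).mono fun r hr =>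
        mul_nonneg hc (Real.rpow_nonneg hr.1.le _)
    rw [← MeasureTheory.ofReal_integral_eq_lintegral_ofReal hci hnn]
    congr 1
    rw [MeasureTheory.integral_const_mul]
    congr 1
    rw [← intervalIntegral.integral_of_le hh0.le,
      integral_rpow (Or.inl (by linarith [hα.2] : (-1:ℝ) < 1 - α))]
    rw [Real.zero_rpow (by intro hc'; rw [show (1:ℝ) - α + 1 = 2 - α by ring] at hc'; linarith [hα.2])]
    rw [show (1:ℝ) - α + 1 = 2 - α by ring]
    ring
  have hmg : ∀ c : ℝ, Measurable fun r : ℝ => ENNReal.ofReal (c * r ^ (1 - α)) := by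
    intro c; fun_prop
  constructor
  · -- lower bound
    have ptL : ∀ z, (∑' k, (A k).indicator
          (fun _ => ENNReal.ofReal ((a (k + 1)) ^ 2)) z)
        ≤ Set.indicator {z : EuclideanSpace ℝ (Fin d) | ‖z‖ ≤ h}
            (fun z => ENNReal.ofReal (‖z‖ ^ 2)) z := by
      intro z
      by_cases hz : ∃ k, z ∈ A k
      · obtain ⟨k, hk⟩ := hz
        have ht : (∑' l, (A l).indicator
            (fun _ => ENNReal.ofReal ((a (l + 1)) ^ 2)) z)
            = ENNReal.ofReal ((a (k + 1)) ^ 2) := by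
          rw [tsum_eq_single k]
          · exact Set.indicator_of_mem hk _
          · intro l hlk
            apply Set.indicator_of_notMem
            intro hl
            have hd := hIdisj hlk
            exact Set.disjoint_left.mp hd ⟨hl.1, hl.2⟩ ⟨hk.1, hk.2⟩
        rw [ht]
        have hzU : z ∈ {z : EuclideanSpace ℝ (Fin d) | ‖z‖ ≤ h} :=
          le_trans hk.2 ((ha_le k).trans le_rfl)
        rw [Set.indicator_of_mem hzU]
        exact ENNReal.ofReal_le_ofReal (by nlinarith [hk.1, ha_pos (k + 1), norm_nonneg z])
      · push_neg at hz
        have : ∀ l, (A l).indicator (fun _ => ENNReal.ofReal ((a (l + 1)) ^ 2)) z = 0 :=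
          fun l => Set.indicator_of_notMem (hz l) _
        rw [tsum_congr this, tsum_zero]
        exact zero_le
    calc Cm * ENNReal.ofReal (ρ ^ 2 * (h ^ (2 - α) / (2 - α)))
        = Cm * ∫⁻ r in Set.Ioc (0 : ℝ) h, ENNReal.ofReal (ρ ^ 2 * r ^ (1 - α)) := by
          rw [final_int _ (sq_nonneg ρ)]
      _ = Cm * ∑' k, ∫⁻ r in I k, ENNReal.ofReal (ρ ^ 2 * r ^ (1 - α)) := by
          rw [← hIunion, lintegral_iUnion hIm hIdisj]
      _ ≤ Cm * ∑' k, ENNReal.ofReal ((a (k + 1)) ^ 2) * Jk k := by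
          apply mul_le_mul_right
          apply ENNReal.tsum_le_tsum
          intro k
          have : ENNReal.ofReal ((a (k + 1)) ^ 2) * Jk k
              = ∫⁻ r in I k, ENNReal.ofReal ((a (k + 1)) ^ 2)
                  * ENNReal.ofReal (r ^ (-(1 + α))) :=
            (lintegral_const_mul' _ _ ENNReal.ofReal_ne_top).symm
          rw [this]
          apply setLIntegral_mono (by fun_prop)
          intro r hr
          have hrpos : 0 < r := (ha_pos (k + 1)).trans hr.1
          rw [← ENNReal.ofReal_mul (sq_nonneg _)]
          apply ENNReal.ofReal_le_ofReal
          have hak1 : ρ * r ≤ a (k + 1) := by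
            rw [ha_succ k]
            exact mul_le_mul_of_nonneg_left hr.2 hρ0.le
          have h1 : ρ ^ 2 * r ^ 2 ≤ (a (k + 1)) ^ 2 := by nlinarith [mul_pos hρ0 hrpos]
          have h2 : r ^ (1 - α) = r ^ 2 * r ^ (-(1 + α)) := by
            rw [← Real.rpow_natCast r 2, ← Real.rpow_add hrpos]
            congr 1
            push_cast
            ring
          have hrp : (0:ℝ) ≤ r ^ (-(1 + α)) := Real.rpow_nonneg hrpos.le _
          calc ρ ^ 2 * r ^ (1 - α) = (ρ ^ 2 * r ^ 2) * r ^ (-(1 + α)) := by rw [h2]; ring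
            _ ≤ (a (k + 1)) ^ 2 * r ^ (-(1 + α)) := mul_le_mul_of_nonneg_right h1 hrp
      _ = ∑' k, ENNReal.ofReal ((a (k + 1)) ^ 2) * (Cm * Jk k) := by
          rw [← ENNReal.tsum_mul_left]
          exact tsum_congr fun k => by ring
      _ ≤ ∑' k, ENNReal.ofReal ((a (k + 1)) ^ 2) * ν (A k) :=
          ENNReal.tsum_le_tsum fun k => mul_le_mul_right (hann k).1 _
      _ = ∑' k, ∫⁻ z, (A k).indicator (fun _ => ENNReal.ofReal ((a (k + 1)) ^ 2)) z ∂ν :=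
          tsum_congr fun k => (lintegral_indicator_const (hAm k) _).symm
      _ = ∫⁻ z, (∑' k, (A k).indicator (fun _ => ENNReal.ofReal ((a (k + 1)) ^ 2)) z) ∂ν :=
          (lintegral_tsum fun k => (measurable_const.indicator (hAm k)).aemeasurable).symm
      _ ≤ _ := by rw [hF_eq]; exact lintegral_mono ptL
  · -- upper bound
    have ptU : ∀ z, Set.indicator {z : EuclideanSpace ℝ (Fin d) | ‖z‖ ≤ h}
          (fun z => ENNReal.ofReal (‖z‖ ^ 2)) z
        ≤ ∑' k, (A k).indicator (fun _ => ENNReal.ofReal ((a k) ^ 2)) z := by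
      intro z
      by_cases hz : z ∈ {z : EuclideanSpace ℝ (Fin d) | ‖z‖ ≤ h}
      · rw [Set.indicator_of_mem hz]
        rcases eq_or_lt_of_le (norm_nonneg z) with h0 | h0
        · simp [← h0]
        · have hmem : ‖z‖ ∈ ⋃ k, I k := by rw [hIunion]; exact ⟨h0, hz⟩
          obtain ⟨k, hk⟩ := Set.mem_iUnion.mp hmem
          have hzA : z ∈ A k := ⟨hk.1, hk.2⟩
          calc ENNReal.ofReal (‖z‖ ^ 2)
              ≤ (A k).indicator (fun _ => ENNReal.ofReal ((a k) ^ 2)) z := by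
                rw [Set.indicator_of_mem hzA]
                exact ENNReal.ofReal_le_ofReal (by nlinarith [norm_nonneg z, hk.2])
            _ ≤ _ := ENNReal.le_tsum k
      · rw [Set.indicator_of_notMem hz]; exact zero_le
    calc (∫⁻ z in {z : EuclideanSpace ℝ (Fin d) | ‖z‖ ≤ h}, ENNReal.ofReal (‖z‖ ^ 2) ∂ν)
        ≤ ∫⁻ z, (∑' k, (A k).indicator (fun _ => ENNReal.ofReal ((a k) ^ 2)) z) ∂ν := by
          rw [hF_eq]; exact lintegral_mono ptU
      _ = ∑' k, ∫⁻ z, (A k).indicator (fun _ => ENNReal.ofReal ((a k) ^ 2)) z ∂ν :=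
          lintegral_tsum fun k => (measurable_const.indicator (hAm k)).aemeasurable
      _ = ∑' k, ENNReal.ofReal ((a k) ^ 2) * ν (A k) :=
          tsum_congr fun k => lintegral_indicator_const (hAm k) _
      _ ≤ ∑' k, ENNReal.ofReal ((a k) ^ 2) * (Cp * Jk k) :=
          ENNReal.tsum_le_tsum fun k => mul_le_mul_right (hann k).2 _
      _ = Cp * ∑' k, ENNReal.ofReal ((a k) ^ 2) * Jk k := by
          rw [← ENNReal.tsum_mul_left]
          exact tsum_congr fun k => by ring
      _ ≤ Cp * ∑' k, ∫⁻ r in I k, ENNReal.ofReal ((ρ ^ 2)⁻¹ * r ^ (1 - α)) := by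
          apply mul_le_mul_right
          apply ENNReal.tsum_le_tsum
          intro k
          have : ENNReal.ofReal ((a k) ^ 2) * Jk k
              = ∫⁻ r in I k, ENNReal.ofReal ((a k) ^ 2) * ENNReal.ofReal (r ^ (-(1 + α))) :=
            (lintegral_const_mul' _ _ ENNReal.ofReal_ne_top).symm
          rw [this]
          apply setLIntegral_mono (by fun_prop)
          intro r hr
          have hrpos : 0 < r := (ha_pos (k + 1)).trans hr.1
          rw [← ENNReal.ofReal_mul (sq_nonneg _)]
          apply ENNReal.ofReal_le_ofReal
          have hak : ρ * a k < r := by rw [← ha_succ k]; exact hr.1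
          have h1 : (a k) ^ 2 ≤ (ρ ^ 2)⁻¹ * r ^ 2 := by
            have hρ2 : (0:ℝ) < ρ ^ 2 := by positivity
            rw [inv_mul_eq_div, le_div_iff₀ hρ2]
            nlinarith [ha_pos k, mul_pos hρ0 (ha_pos k)]
          have h2 : r ^ (1 - α) = r ^ 2 * r ^ (-(1 + α)) := by
            rw [← Real.rpow_natCast r 2, ← Real.rpow_add hrpos]
            congr 1
            push_cast
            ring
          have hrp : (0:ℝ) ≤ r ^ (-(1 + α)) := Real.rpow_nonneg hrpos.le _
          calc (a k) ^ 2 * r ^ (-(1 + α))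
              ≤ ((ρ ^ 2)⁻¹ * r ^ 2) * r ^ (-(1 + α)) := mul_le_mul_of_nonneg_right h1 hrp
            _ = (ρ ^ 2)⁻¹ * r ^ (1 - α) := by rw [h2]; ring
      _ = Cp * ∫⁻ r in Set.Ioc (0 : ℝ) h, ENNReal.ofReal ((ρ ^ 2)⁻¹ * r ^ (1 - α)) := by
          rw [← hIunion, lintegral_iUnion hIm hIdisj]
      _ = Cp * ENNReal.ofReal ((ρ ^ 2)⁻¹ * (h ^ (2 - α) / (2 - α))) := by
          rw [final_int _ (by positivity)]

set_option maxHeartbeats 1000000 in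
theorem stmt13 {d : ℕ}
    (ν Λ : Measure (EuclideanSpace ℝ (Fin d))) [IsFiniteMeasure Λ]
    (hΛne : Λ ≠ 0)
    (hΛsphere : Λ {θ : EuclideanSpace ℝ (Fin d) | ‖θ‖ ≠ 1} = 0)
    (q : ℝ → EuclideanSpace ℝ (Fin d) → ℝ)
    (hq : ∀ r ∈ Set.Ioc (0 : ℝ) 1, ∀ θ : EuclideanSpace ℝ (Fin d), ‖θ‖ = 1 → 0 < q r θ)
    (α : ℝ) (hα : α ∈ Set.Ioo (0 : ℝ) 2)
    (c₀ : EuclideanSpace ℝ (Fin d) → ℝ)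
    (hc₀pos : ∀ θ : EuclideanSpace ℝ (Fin d), ‖θ‖ = 1 → 0 < c₀ θ)
    (hc₀int : Integrable c₀ Λ)
    (hconv : ∀ η > (0 : ℝ), ∃ r₀ > (0 : ℝ), ∀ r ∈ Set.Ioo (0 : ℝ) r₀,
      ∀ θ : EuclideanSpace ℝ (Fin d), ‖θ‖ = 1 → |r ^ (1 + α) * q r θ - c₀ θ| < η)
    (hpolar : ∀ A : Set (EuclideanSpace ℝ (Fin d)), MeasurableSet A →
      A ⊆ {z : EuclideanSpace ℝ (Fin d) | 0 < ‖z‖ ∧ ‖z‖ ≤ 1} →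
      ν A = ∫⁻ θ, (∫⁻ r in Set.Ioc (0 : ℝ) 1,
        Set.indicator A (fun _ => (1 : ℝ≥0∞)) (r • θ) * ENNReal.ofReal (q r θ)) ∂Λ) :
    Tendsto (fun h : ℝ => h ^ (α - 2) *
        (∫⁻ z in {z : EuclideanSpace ℝ (Fin d) | ‖z‖ ≤ h},
          ENNReal.ofReal (‖z‖ ^ 2) ∂ν).toReal)
      (nhdsWithin 0 (Set.Ioi 0))
      (nhds ((1 / (2 - α)) * ∫ θ, c₀ θ ∂Λ)) ∧
    0 < (1 / (2 - α)) * ∫ θ, c₀ θ ∂Λ := by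
  have hα2 : (0:ℝ) < 2 - α := by linarith [hα.2]
  have aesph : ∀ᵐ θ ∂Λ, ‖θ‖ = 1 := by rw [ae_iff]; exact hΛsphere
  have hc₀m : AEMeasurable c₀ Λ := hc₀int.1.aemeasurable
  set I : ℝ := ∫ θ, c₀ θ ∂Λ with hIdef
  have hIpos : 0 < I := by
    have hnn : 0 ≤ᵐ[Λ] c₀ := aesph.mono fun θ hθ => (hc₀pos θ hθ).le
    rw [hIdef, integral_pos_iff_support_of_nonneg_ae hnn hc₀int]
    have hsub : {θ : EuclideanSpace ℝ (Fin d) | ‖θ‖ = 1} ⊆ Function.support c₀ :=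
      fun θ hθ => (hc₀pos θ hθ).ne'
    have h1 : Λ Set.univ ≤ Λ (Function.support c₀) := by
      calc Λ Set.univ
          = Λ ({θ : EuclideanSpace ℝ (Fin d) | ‖θ‖ = 1}
              ∪ {θ : EuclideanSpace ℝ (Fin d) | ‖θ‖ ≠ 1}) := by
            congr 1
            ext θ
            by_cases hθ : ‖θ‖ = 1 <;> simp [hθ]
        _ ≤ Λ {θ : EuclideanSpace ℝ (Fin d) | ‖θ‖ = 1}
            + Λ {θ : EuclideanSpace ℝ (Fin d) | ‖θ‖ ≠ 1} := measure_union_le _ _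
        _ = Λ {θ : EuclideanSpace ℝ (Fin d) | ‖θ‖ = 1} := by rw [hΛsphere, add_zero]
        _ ≤ Λ (Function.support c₀) := measure_mono hsub
    exact lt_of_lt_of_le (Measure.measure_univ_pos.mpr hΛne) h1
  refine ⟨?_, mul_pos (by positivity) hIpos⟩
  set M : ℝ := (Λ Set.univ).toReal with hMdef
  have hM : 0 ≤ M := ENNReal.toReal_nonneg
  rw [Metric.tendsto_nhds]
  intro ε hε
  have hdiv : ∀ x y : ℝ, x ≤ y → x / (2 - α) ≤ y / (2 - α) := fun x y hxy => by
    rw [div_eq_mul_inv, div_eq_mul_inv]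
    exact mul_le_mul_of_nonneg_right hxy (inv_nonneg.mpr hα2.le)
  -- choice of η
  set η : ℝ := min 1 (ε * (2 - α) / (4 * (M + 1))) with hηdef
  have hη0 : 0 < η := lt_min one_pos (by positivity)
  have hη1 : η ≤ 1 := min_le_left _ _
  have hηM : η * M / (2 - α) ≤ ε / 4 := by
    rw [div_le_iff₀ hα2]
    have hη2 : η ≤ ε * (2 - α) / (4 * (M + 1)) := min_le_right _ _
    have h1 : η * M ≤ ε * (2 - α) / (4 * (M + 1)) * M := mul_le_mul_of_nonneg_right hη2 hM
    have h2 : ε * (2 - α) / (4 * (M + 1)) * M ≤ ε / 4 * (2 - α) := by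
      rw [div_mul_eq_mul_div, div_le_iff₀ (by positivity : (0:ℝ) < 4 * (M + 1))]
      nlinarith [mul_pos hε hα2]
    linarith
  obtain ⟨r₀, hr₀pos, hr₀spec⟩ := hconv η hη0
  -- choice of u and ρ
  set K₀ : ℝ := (I + M + 1) / (2 - α) with hK₀def
  have hK₀pos : 0 < K₀ := div_pos (by linarith) hα2
  set u : ℝ := min (1/2) (ε / (4 * K₀)) with hudef
  have hu0 : 0 < u := lt_min (by norm_num) (by positivity)
  have hu2 : u ≤ 1/2 := min_le_left _ _
  have huK : u * K₀ ≤ ε / 4 := by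
    have hu3 : u ≤ ε / (4 * K₀) := min_le_right _ _
    calc u * K₀ ≤ ε / (4 * K₀) * K₀ := mul_le_mul_of_nonneg_right hu3 hK₀pos.le
      _ = ε / 4 := by field_simp
  set ρ : ℝ := 1 - u / 4 with hρdef
  have hρ0 : 0 < ρ := by rw [hρdef]; linarith
  have hρ1 : ρ < 1 := by rw [hρdef]; linarith
  have hρsq : 1 - u ≤ ρ ^ 2 := by rw [hρdef]; nlinarith [sq_nonneg u]
  have hρ2pos : (0:ℝ) < ρ ^ 2 := by positivity
  have hρinv : (ρ ^ 2)⁻¹ ≤ 1 + u := by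
    have h2' : 1 ≤ (1 + u) * ρ ^ 2 := by
      rw [hρdef]
      nlinarith [mul_nonneg hu0.le (sub_nonneg.mpr hu2), sq_nonneg u,
        mul_nonneg (mul_nonneg hu0.le hu0.le) hu0.le]
    rw [← one_div, div_le_iff₀ hρ2pos]
    linarith
  -- Cp and Cm facts
  set Cm : ℝ≥0∞ := ∫⁻ θ, ENNReal.ofReal (c₀ θ - η) ∂Λ with hCmdef
  set Cp : ℝ≥0∞ := ∫⁻ θ, ENNReal.ofReal (c₀ θ + η) ∂Λ with hCpdef
  have hint2 : Integrable (fun θ => c₀ θ + η) Λ := hc₀int.add (integrable_const η)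
  have hCp : Cp = ENNReal.ofReal (I + η * M) := by
    rw [hCpdef, ← MeasureTheory.ofReal_integral_eq_lintegral_ofReal hint2
      (aesph.mono fun θ hθ => by have := hc₀pos θ hθ; dsimp; linarith)]
    congr 1
    rw [integral_add hc₀int (integrable_const η), integral_const]
    simp only [smul_eq_mul, ← hIdef, ← hMdef]
    rw [measureReal_def, hMdef]; ring
  have hCp_ne : Cp ≠ ⊤ := by rw [hCp]; exact ENNReal.ofReal_ne_top
  have hCpR : Cp.toReal = I + η * M := by
    rw [hCp, ENNReal.toReal_ofReal (by nlinarith [mul_nonneg hη0.le hM])]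
  have hCm_le : Cm ≤ Cp :=
    lintegral_mono fun θ => ENNReal.ofReal_le_ofReal (by linarith)
  have hT0 : 0 ≤ Cm.toReal := ENNReal.toReal_nonneg
  have hT2 : Cm.toReal ≤ I + η * M := by
    rw [← hCpR]; exact ENNReal.toReal_mono hCp_ne hCm_le
  have hT1 : I - η * M ≤ Cm.toReal := by
    have hg : Integrable (fun θ => max (c₀ θ - η) 0) Λ :=
      (hc₀int.sub (integrable_const η)).pos_part
    have hgeq : Cm = ENNReal.ofReal (∫ θ, max (c₀ θ - η) 0 ∂Λ) := by
      rw [MeasureTheory.ofReal_integral_eq_lintegral_ofReal hg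
        (ae_of_all _ fun θ => le_max_right _ _)]
      exact lintegral_congr fun θ => (ofReal_max_zero' _).symm
    have h1 : ∫ θ, (c₀ θ - η) ∂Λ ≤ ∫ θ, max (c₀ θ - η) 0 ∂Λ :=
      integral_mono (hc₀int.sub (integrable_const η)) hg fun θ => le_max_left _ _
    have h2 : ∫ θ, (c₀ θ - η) ∂Λ = I - η * M := by
      rw [integral_sub hc₀int (integrable_const η), integral_const]
      simp only [smul_eq_mul, ← hIdef, ← hMdef]
      rw [measureReal_def, hMdef]; ring
    have hnonneg : (0:ℝ) ≤ ∫ θ, max (c₀ θ - η) 0 ∂Λ :=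
      integral_nonneg fun θ => le_max_right _ _
    rw [hgeq, ENNReal.toReal_ofReal hnonneg]
    linarith
  have hK : (I + η * M) / (2 - α) ≤ K₀ := hdiv _ _ (by nlinarith [hη1, hM])
  -- eventual bound
  set δ : ℝ := min r₀ 1 with hδdef
  have hδ0 : 0 < δ := lt_min hr₀pos one_pos
  filter_upwards [Ioo_mem_nhdsGT_of_mem (Set.mem_Ico.mpr ⟨le_refl (0:ℝ), hδ0⟩)] with h hh
  obtain ⟨hh0, hhδ⟩ := hh
  have hh1 : h ≤ 1 := le_of_lt (lt_of_lt_of_le hhδ (min_le_right _ _))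
  have hhr : h < r₀ := lt_of_lt_of_le hhδ (min_le_left _ _)
  obtain ⟨hlow, hup⟩ := F_bound ν Λ hΛsphere q α hα c₀ hc₀pos hc₀m η hη0 r₀ hr₀spec hpolar
    ρ hρ0 hρ1 h hh0 hh1 hhr
    (fun b a hb hba ha1 har =>
      annulus_bound ν Λ hΛsphere q α c₀ hc₀pos hc₀m η hη0 r₀ hr₀spec hpolar b a hb hba ha1 har)
  set F : ℝ≥0∞ := ∫⁻ z in {z : EuclideanSpace ℝ (Fin d) | ‖z‖ ≤ h},
    ENNReal.ofReal (‖z‖ ^ 2) ∂ν with hFdef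
  have hF_ne : F ≠ ⊤ :=
    ne_top_of_le_ne_top (ENNReal.mul_ne_top hCp_ne ENNReal.ofReal_ne_top) hup
  have hX0 : (0:ℝ) ≤ h ^ (2 - α) / (2 - α) :=
    div_nonneg (Real.rpow_nonneg hh0.le _) hα2.le
  have hupR : F.toReal ≤ (I + η * M) * ((ρ ^ 2)⁻¹ * (h ^ (2 - α) / (2 - α))) := by
    have h1 := ENNReal.toReal_mono (ENNReal.mul_ne_top hCp_ne ENNReal.ofReal_ne_top) hup
    rwa [ENNReal.toReal_mul, hCpR,
      ENNReal.toReal_ofReal (mul_nonneg (inv_nonneg.mpr hρ2pos.le) hX0)] at h1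
  have hlowR : Cm.toReal * (ρ ^ 2 * (h ^ (2 - α) / (2 - α))) ≤ F.toReal := by
    have h1 := ENNReal.toReal_mono hF_ne hlow
    rwa [ENNReal.toReal_mul,
      ENNReal.toReal_ofReal (mul_nonneg (sq_nonneg ρ) hX0)] at h1
  have hpow : 0 < h ^ (α - 2) := Real.rpow_pos_of_pos hh0 _
  have hone : h ^ (α - 2) * h ^ (2 - α) = 1 := by
    rw [← Real.rpow_add hh0]; norm_num
  have hub2 : h ^ (α - 2) * F.toReal ≤ (I + η * M) * (ρ ^ 2)⁻¹ / (2 - α) := by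
    have h1 := mul_le_mul_of_nonneg_left hupR hpow.le
    have h2 : h ^ (α - 2) * ((I + η * M) * ((ρ ^ 2)⁻¹ * (h ^ (2 - α) / (2 - α))))
        = (h ^ (α - 2) * h ^ (2 - α)) * ((I + η * M) * (ρ ^ 2)⁻¹ / (2 - α)) := by ring
    rw [h2, hone, one_mul] at h1
    exact h1
  have hlb2 : Cm.toReal * ρ ^ 2 / (2 - α) ≤ h ^ (α - 2) * F.toReal := by
    have h1 := mul_le_mul_of_nonneg_left hlowR hpow.le
    have h2 : h ^ (α - 2) * (Cm.toReal * (ρ ^ 2 * (h ^ (2 - α) / (2 - α))))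
        = (h ^ (α - 2) * h ^ (2 - α)) * (Cm.toReal * ρ ^ 2 / (2 - α)) := by ring
    rw [h2, hone, one_mul] at h1
    exact h1
  rw [Real.dist_eq, abs_sub_lt_iff]
  have hL : (1:ℝ) / (2 - α) * I = I / (2 - α) := by ring
  constructor
  · -- upper
    have c0 : (0:ℝ) ≤ (I + η * M) / (2 - α) :=
      div_nonneg (by nlinarith [mul_nonneg hη0.le hM]) hα2.le
    have c1 : (I + η * M) * (ρ ^ 2)⁻¹ / (2 - α) ≤ (1 + u) * ((I + η * M) / (2 - α)) := by
      have e : (I + η * M) * (ρ ^ 2)⁻¹ / (2 - α) = (ρ ^ 2)⁻¹ * ((I + η * M) / (2 - α)) := by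
        ring
      rw [e]
      exact mul_le_mul_of_nonneg_right hρinv c0
    have c2 : u * ((I + η * M) / (2 - α)) ≤ ε / 4 :=
      le_trans (mul_le_mul_of_nonneg_left hK hu0.le) huK
    have c3 : (I + η * M) / (2 - α) = I / (2 - α) + η * M / (2 - α) := by ring
    have c4 : (1 + u) * ((I + η * M) / (2 - α))
        = (I + η * M) / (2 - α) + u * ((I + η * M) / (2 - α)) := by ring
    linarith
  · -- lower
    have d0 : (0:ℝ) ≤ Cm.toReal / (2 - α) := div_nonneg hT0 hα2.le
    have d1 : (1 - u) * (Cm.toReal / (2 - α)) ≤ Cm.toReal * ρ ^ 2 / (2 - α) := by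
      have e : Cm.toReal * ρ ^ 2 / (2 - α) = ρ ^ 2 * (Cm.toReal / (2 - α)) := by ring
      rw [e]
      exact mul_le_mul_of_nonneg_right hρsq d0
    have d2 : (I - η * M) / (2 - α) ≤ Cm.toReal / (2 - α) := hdiv _ _ hT1
    have d3 : u * (Cm.toReal / (2 - α)) ≤ ε / 4 :=
      le_trans (mul_le_mul_of_nonneg_left (le_trans (hdiv _ _ hT2) hK) hu0.le) huK
    have d4 : (1 - u) * (Cm.toReal / (2 - α))
        = Cm.toReal / (2 - α) - u * (Cm.toReal / (2 - α)) := by ring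
    have d5 : (I - η * M) / (2 - α) = I / (2 - α) - η * M / (2 - α) := by ring
    linarith
end

section
/- Let f ∈ C¹(ℝ^d, (0,∞)) be a probability density of the form f(z) = g(|z|) for some g ∈ C¹((0,∞), (0,∞)) with g'(s) < 0 for all s > 0 and g' ∈ L¹. Then the map r ↦ ∫_{ℝ^d} |f(z + r e₁) - f(z)| dz from (0,∞) to (0,∞) is strictly increasing; in particular it is injective. -/
open MeasureTheory

private lemma abs_sub_eq18 (a b : ℝ) : |a - b| = a + b - 2 * min a b := by
  rcases le_total a b with h | h
  · rw [abs_of_nonpos (by linarith), min_eq_left h]; ring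
  · rw [abs_of_nonneg (by linarith), min_eq_right h]; ring

theorem stmt18 {d : ℕ} (hd : 0 < d)
    (f : EuclideanSpace ℝ (Fin d) → ℝ) (g : ℝ → ℝ)
    (hf : ContDiff ℝ 1 f) (hfpos : ∀ z, 0 < f z)
    (hdens : ∫ z, f z = 1)
    (hrad : ∀ z, f z = g ‖z‖)
    (hg : ContDiffOn ℝ 1 g (Set.Ioi 0))
    (hgpos : ∀ s : ℝ, 0 < s → 0 < g s)
    (hg' : ∀ s : ℝ, 0 < s → deriv g s < 0)
    (hgL1 : Integrable (fun z : EuclideanSpace ℝ (Fin d) => deriv g ‖z‖)) :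
    StrictMonoOn
      (fun r : ℝ => ∫ z, |f (z + r • EuclideanSpace.single (⟨0, hd⟩ : Fin d) 1) - f z|)
      (Set.Ioi 0) ∧
    Set.InjOn
      (fun r : ℝ => ∫ z, |f (z + r • EuclideanSpace.single (⟨0, hd⟩ : Fin d) 1) - f z|)
      (Set.Ioi 0) := by
  set e : EuclideanSpace ℝ (Fin d) := EuclideanSpace.single (⟨0, hd⟩ : Fin d) 1 with he
  have hne : ‖e‖ = 1 := by simp [he, EuclideanSpace.norm_single]
  have hfc : Continuous f := hf.continuous
  have hint : Integrable f := by
    by_contra h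
    rw [integral_undef h] at hdens
    norm_num at hdens
  -- g is strictly antitone on [0, ∞)
  have hgeq : ∀ t : ℝ, 0 ≤ t → g t = f (t • e) := by
    intro t ht
    rw [hrad, norm_smul, hne, mul_one, Real.norm_eq_abs, abs_of_nonneg ht]
  have hgc : ContinuousOn g (Set.Ici 0) := by
    have : ContinuousOn (fun t : ℝ => f (t • e)) (Set.Ici 0) :=
      (hfc.comp (continuous_id.smul continuous_const)).continuousOn
    exact this.congr hgeq
  have hganti : StrictAntiOn g (Set.Ici 0) := by
    apply strictAntiOn_of_deriv_neg (convex_Ici 0) hgc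
    intro x hx
    rw [interior_Ici] at hx
    exact hg' x hx
  -- pointwise: min (f z) (f (z + v)) = g (max ‖z‖ ‖z + v‖)
  have hmin : ∀ (z v : EuclideanSpace ℝ (Fin d)),
      min (f z) (f (z + v)) = g (max ‖z‖ ‖z + v‖) := by
    intro z v
    rw [hrad z, hrad (z + v)]
    rcases le_total ‖z‖ ‖z + v‖ with h | h
    · rw [max_eq_right h, min_eq_right (hganti.antitoneOn (Set.mem_Ici.2 (norm_nonneg _))
        (Set.mem_Ici.2 (norm_nonneg _)) h)]
    · rw [max_eq_left h, min_eq_left (hganti.antitoneOn (Set.mem_Ici.2 (norm_nonneg _))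
        (Set.mem_Ici.2 (norm_nonneg _)) h)]
  -- norm square expansion
  have hsq : ∀ (z : EuclideanSpace ℝ (Fin d)) (s : ℝ),
      ‖z + s • e‖ ^ 2 = ‖z‖ ^ 2 + 2 * s * inner ℝ z e + s ^ 2 := by
    intro z s
    rw [norm_add_sq_real, real_inner_smul_right, norm_smul, hne, mul_one,
      Real.norm_eq_abs, sq_abs]
    ring
  -- key monotonicity of max of norms
  have hkey : ∀ (z : EuclideanSpace ℝ (Fin d)) {r r' : ℝ}, 0 < r → r ≤ r' →
      max ‖z‖ ‖z + r • e‖ ≤ max ‖z‖ ‖z + r' • e‖ := by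
    intro z r r' hr hrr
    set t : ℝ := inner ℝ z e with ht
    apply max_le (le_max_left _ _)
    rcases le_or_gt (2 * r * t + r ^ 2) 0 with h | h
    · refine le_trans ?_ (le_max_left _ _)
      rw [← pow_le_pow_iff_left₀ (norm_nonneg _) (norm_nonneg _) two_ne_zero, hsq]
      linarith
    · refine le_trans ?_ (le_max_right _ _)
      rw [← pow_le_pow_iff_left₀ (norm_nonneg _) (norm_nonneg _) two_ne_zero, hsq, hsq]
      have h2 : 0 < 2 * t + r := by nlinarith
      nlinarith
  -- integrability of the min
  have hintv : ∀ v : EuclideanSpace ℝ (Fin d), Integrable (fun z => f (z + v)) :=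
    fun v => hint.comp_add_right v
  have hcv : ∀ v : EuclideanSpace ℝ (Fin d), Continuous (fun z => f (z + v)) :=
    fun v => hfc.comp (continuous_id.add continuous_const)
  have hminint : ∀ v : EuclideanSpace ℝ (Fin d),
      Integrable (fun z => min (f z) (f (z + v))) := by
    intro v
    refine hint.mono ((hfc.min (hcv v)).aestronglyMeasurable) ?_
    filter_upwards with z
    rw [Real.norm_eq_abs, Real.norm_eq_abs, abs_of_pos (hfpos z),
      abs_of_pos (lt_min (hfpos z) (hfpos _))]
    exact min_le_left _ _
  -- the identity A r = 2 - 2 * M r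
  have hA : ∀ r : ℝ, ∫ z, |f (z + r • e) - f z| =
      2 - 2 * ∫ z, min (f z) (f (z + r • e)) := by
    intro r
    have : ∀ z, |f (z + r • e) - f z| =
        f (z + r • e) + f z - 2 * min (f z) (f (z + r • e)) := by
      intro z
      rw [abs_sub_eq18, min_comm]
    have hI1 : Integrable (fun z => f (z + r • e) + f z) := (hintv _).add hint
    have hI2 : Integrable (fun z => 2 * min (f z) (f (z + r • e))) :=
      (hminint _).const_mul 2
    calc ∫ z, |f (z + r • e) - f z|
        = ∫ z, (f (z + r • e) + f z - 2 * min (f z) (f (z + r • e))) := by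
          exact integral_congr_ae (Filter.Eventually.of_forall this)
      _ = (∫ z, (f (z + r • e) + f z)) - ∫ z, 2 * min (f z) (f (z + r • e)) :=
          integral_sub hI1 hI2
      _ = ((∫ z, f (z + r • e)) + ∫ z, f z) - ∫ z, 2 * min (f z) (f (z + r • e)) := by
          rw [integral_add (hintv _) hint]
      _ = ((∫ z, f (z + r • e)) + ∫ z, f z) - 2 * ∫ z, min (f z) (f (z + r • e)) := by
          rw [integral_const_mul]
      _ = 2 - 2 * ∫ z, min (f z) (f (z + r • e)) := by
          rw [integral_add_right_eq_self f (r • e), hdens]; ring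
  -- strict decrease of M
  have hM : ∀ r r' : ℝ, 0 < r → r < r' →
      (∫ z, min (f z) (f (z + r' • e))) < ∫ z, min (f z) (f (z + r • e)) := by
    intro r r' hr hrr
    have hr' : 0 < r' := hr.trans hrr
    rw [← sub_pos, ← integral_sub (hminint _) (hminint _)]
    set D : EuclideanSpace ℝ (Fin d) → ℝ :=
      fun z => min (f z) (f (z + r • e)) - min (f z) (f (z + r' • e)) with hD
    have hDc : Continuous D := (hfc.min (hcv _)).sub (hfc.min (hcv _))
    have hD0 : 0 ≤ D := by
      intro z
      simp only [hD, Pi.zero_apply, sub_nonneg, hmin]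
      exact hganti.antitoneOn
        (Set.mem_Ici.2 (le_trans (norm_nonneg z) (le_max_left _ _)))
        (Set.mem_Ici.2 (le_trans (norm_nonneg z) (le_max_left _ _)))
        (hkey z hr hrr.le)
    have hDe : 0 < D e := by
      have h1 : ∀ s : ℝ, 0 < s → ‖e + s • e‖ = 1 + s := by
        intro s hs
        have : e + s • e = (1 + s) • e := by rw [add_smul, one_smul]
        rw [this, norm_smul, hne, mul_one, Real.norm_eq_abs, abs_of_pos (by linarith)]
      simp only [hD, hmin, h1 r hr, h1 r' hr', hne]
      rw [sub_pos, max_eq_right (by linarith), max_eq_right (by linarith)]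
      exact hganti (Set.mem_Ici.2 (by linarith)) (Set.mem_Ici.2 (by linarith)) (by linarith)
    have hDint : Integrable D := (hminint _).sub (hminint _)
    refine (integral_pos_iff_support_of_nonneg hD0 hDint).2 ?_
    have hopen : IsOpen (Function.support D) := by
      rw [Function.support_eq_preimage]
      exact isOpen_compl_singleton.preimage hDc
    exact hopen.measure_pos volume ⟨e, hDe.ne'⟩
  have hmono : StrictMonoOn
      (fun r : ℝ => ∫ z, |f (z + r • e) - f z|) (Set.Ioi 0) := by
    intro r hr r' hr' hlt
    simp only [hA]
    have := hM r r' hr hlt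
    linarith
  exact ⟨hmono, hmono.injOn⟩
end
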